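/- arXiv:1611.06173 — 4 statements merged into one kernel-verified Lean document; each statement's English description precedes it below -/
import Mathlib

section
/- Let p ∈ [1,∞), K ≥ 1, δ ∈ (0,1), and set ε = (δ/2)^{(1+p)/p}. Then for any u ∈ [-K,K]^ℕ and n ≥ 1, the maximum cardinality of a subset of the d_{n,p}-ball of radius ε centered at u that is δ-separated with respect to d_{n,∞} is at most (3K/δ)^{δn/2} · 2^{H(δ/2) n}, where H(x) = -x log x - (1-x) log(1-x). -/
open Finset

/-- The normalized ℓ_p pseudo-distance on initial segments of length `n`. -/
noncomputable def dnp (p : ℝ) (n : ℕ) (u v : ℕ → ℝ) : ℝ :=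
  ((1 / (n : ℝ)) * ∑ k ∈ Finset.range n, |u k - v k| ^ p) ^ (1 / p)

/-- The ℓ_∞ pseudo-distance on initial segments of length `n`. -/
noncomputable def dninf (n : ℕ) (u v : ℕ → ℝ) : ℝ :=
  ⨆ k : Fin n, |u (k : ℕ) - v (k : ℕ)|

/-- Binary entropy function (base-2 logarithms). -/
noncomputable def binEnt (x : ℝ) : ℝ :=
  -(x * Real.logb 2 x) - (1 - x) * Real.logb 2 (1 - x)


def sbcCost (j : ℤ) : ℕ := if j = 0 then 0 else 2 * j.natAbs - 1

noncomputable def sbcCode (δ x : ℝ) : ℤ := ⌊x / δ + 1 / 2⌋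

lemma sbcCost_neg (j : ℤ) : sbcCost (-j) = sbcCost j := by
  simp [sbcCost]

lemma sbcCost_coe_succ (a : ℕ) : sbcCost ((a : ℤ) + 1) = 2 * a + 1 := by
  have h1 : ((a : ℤ) + 1) ≠ 0 := by omega
  have h2 : ((a : ℤ) + 1).natAbs = a + 1 := by omega
  rw [sbcCost, if_neg h1, h2]
  omega

lemma sbcCost_cast {j : ℤ} (h : j ≠ 0) : (sbcCost j : ℝ) = 2 * |(j : ℝ)| - 1 := by
  have h1 : 1 ≤ j.natAbs := by omega
  unfold sbcCost
  rw [if_neg h]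
  push_cast [Nat.cast_sub (by omega : 1 ≤ 2 * j.natAbs)]
  rw [Nat.cast_natAbs, Int.cast_abs]

lemma sbcCode_close {δ : ℝ} (hδ : 0 < δ) {x y : ℝ} (h : sbcCode δ x = sbcCode δ y) :
    |x - y| < δ := by
  unfold sbcCode at h
  have hx := Int.floor_le (x / δ + 1 / 2)
  have hx' := Int.lt_floor_add_one (x / δ + 1 / 2)
  have hy := Int.floor_le (y / δ + 1 / 2)
  have hy' := Int.lt_floor_add_one (y / δ + 1 / 2)
  rw [h] at hx hx'
  have ex : x / δ * δ = x := div_mul_cancel₀ x hδ.ne'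
  have ey : y / δ * δ = y := div_mul_cancel₀ y hδ.ne'
  rw [abs_sub_lt_iff]
  constructor <;> nlinarith [hδ]

lemma sbcCode_cost {δ : ℝ} (hδ : 0 < δ) (x : ℝ) :
    (sbcCost (sbcCode δ x) : ℝ) * (δ / 2) ≤ |x| := by
  rcases eq_or_ne (sbcCode δ x) 0 with h0 | h0
  · rw [h0]; simp [sbcCost]
  · rw [sbcCost_cast h0]
    unfold sbcCode at h0 ⊢
    have hx := Int.floor_le (x / δ + 1 / 2)
    have hx' := Int.lt_floor_add_one (x / δ + 1 / 2)
    have ex : x / δ * δ = x := div_mul_cancel₀ x hδ.ne'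
    set j : ℤ := ⌊x / δ + 1 / 2⌋ with hj
    rcases lt_trichotomy j 0 with hneg | hz | hpos
    · -- j ≤ -1 : x < (j+1/2) δ ≤ -δ/2
      have hj1 : (j : ℝ) ≤ -1 := by
        have : j ≤ -1 := by omega
        exact_mod_cast this
      have habs : |(j : ℝ)| = -(j : ℝ) := abs_of_neg (by linarith)
      have hxneg : x < (↑j + 1/2) * δ := by nlinarith [hx']
      have : (2 * |(j:ℝ)| - 1) * (δ/2) ≤ -x := by rw [habs]; nlinarith
      calc (2 * |(j:ℝ)| - 1) * (δ/2) ≤ -x := this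
        _ ≤ |x| := neg_le_abs x
    · exact absurd hz h0
    · have hj1 : (1 : ℝ) ≤ (j : ℝ) := by exact_mod_cast hpos
      have habs : |(j : ℝ)| = (j : ℝ) := abs_of_pos (by linarith)
      have hxpos : (↑j - 1/2) * δ ≤ x := by nlinarith [hx]
      have : (2 * |(j:ℝ)| - 1) * (δ/2) ≤ x := by rw [habs]; nlinarith
      calc (2 * |(j:ℝ)| - 1) * (δ/2) ≤ x := this
        _ ≤ |x| := le_abs_self x

lemma nat_le_rpow {p : ℝ} (hp : 1 ≤ p) (c : ℕ) : (c : ℝ) ≤ (c : ℝ) ^ p := by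
  rcases Nat.eq_zero_or_pos c with h | h
  · subst h; simp [Real.zero_rpow (by linarith : p ≠ 0)]
  · have h1 : (1 : ℝ) ≤ (c : ℝ) := by exact_mod_cast h
    calc (c : ℝ) = (c : ℝ) ^ (1 : ℝ) := (Real.rpow_one _).symm
      _ ≤ (c : ℝ) ^ p := Real.rpow_le_rpow_of_exponent_le h1 hp

lemma geom_tail_le {T : ℝ} (h0 : 0 ≤ T) (h1 : T < 1) (M : ℕ) :
    ∑ a ∈ range M, T ^ (2 * a + 1) ≤ T / (1 - T ^ 2) := by
  have hT2 : T ^ 2 < 1 := by nlinarith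
  have hT2' : (0:ℝ) < 1 - T ^ 2 := by linarith
  have : ∑ a ∈ range M, T ^ (2 * a + 1) = T * ∑ a ∈ range M, (T ^ 2) ^ a := by
    rw [Finset.mul_sum]
    refine Finset.sum_congr rfl fun a _ => ?_
    rw [← pow_mul]; ring
  rw [this]
  have hgs : ∑ a ∈ range M, (T ^ 2) ^ a ≤ 1 / (1 - T ^ 2) := by
    have := geom_sum_mul (T ^ 2) M
    have hpow : (0:ℝ) ≤ (T ^ 2) ^ M := by positivity
    rw [le_div_iff₀ hT2']
    nlinarith
  calc T * ∑ a ∈ range M, (T ^ 2) ^ a ≤ T * (1 / (1 - T ^ 2)) := by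
        apply mul_le_mul_of_nonneg_left hgs h0
    _ = T / (1 - T ^ 2) := by ring



set_option maxHeartbeats 2000000 in
theorem separated_in_ball_card_bound
    (p : ℝ) (hp : 1 ≤ p) (K : ℝ) (hK : 1 ≤ K) (δ : ℝ) (hδ : 0 < δ) (hδ1 : δ < 1)
    (ε : ℝ) (hε : ε = (δ / 2) ^ ((1 + p) / p))
    (u : ℕ → ℝ) (hu : ∀ k, u k ∈ Set.Icc (-K) K) (n : ℕ) (hn : 1 ≤ n)
    (S : Finset (ℕ → ℝ))
    (hSball : ∀ v ∈ S, dnp p n u v ≤ ε)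
    (hSsep : ∀ v ∈ S, ∀ w ∈ S, v ≠ w → δ ≤ dninf n v w) :
    (S.card : ℝ) ≤ (3 * K / δ) ^ (δ * n / 2) * 2 ^ (binEnt (δ / 2) * n) := by
  classical
  have hn0 : (0 : ℝ) < n := by exact_mod_cast hn
  have hδ2 : (0 : ℝ) < 2 - δ := by linarith
  have hp0 : (0 : ℝ) < p := by linarith
  set α : ℝ := δ / 2 with hα
  have hα0 : 0 < α := by positivity
  have hα1 : α < 1 := by rw [hα]; linarith
  have h1α : 0 < 1 - α := by linarith
  set y : ℝ := δ / (2 - δ) with hy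
  have hy0 : 0 < y := by positivity
  have hyδ : y * (2 - δ) = δ := by rw [hy]; field_simp
  have hy1 : y < 1 := by nlinarith
  set T : ℝ := δ * y / 3 with hT
  have hT0 : 0 < T := by positivity
  have hT3 : T ≤ 1 / 3 := by rw [hT]; nlinarith
  have hT1 : T < 1 := by linarith
  set m₀ : ℝ := δ * n / 2 with hm₀
  have hm₀0 : 0 < m₀ := by positivity
  -- the coding map
  set code : (ℕ → ℝ) → ℕ → ℤ := fun v k => sbcCode δ (v k - u k) with hcode
  set C : (ℕ → ℝ) → ℕ := fun v => ∑ k ∈ range n, sbcCost (code v k) with hC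
  -- budget bound
  have hαp : (0:ℝ) < α ^ p := Real.rpow_pos_of_pos hα0 p
  have hCost : ∀ v ∈ S, (C v : ℝ) ≤ m₀ := by
    intro v hv
    have hsum0 : 0 ≤ ∑ k ∈ range n, |u k - v k| ^ p :=
      Finset.sum_nonneg fun k _ => Real.rpow_nonneg (abs_nonneg _) p
    have hsum : ∑ k ∈ range n, |u k - v k| ^ p ≤ (n : ℝ) * α ^ (1 + p) := by
      have hb := hSball v hv
      rw [dnp, hε] at hb
      have hx0 : 0 ≤ 1 / (n : ℝ) * ∑ k ∈ range n, |u k - v k| ^ p := by positivity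
      have h2 : ((1 / (n : ℝ) * ∑ k ∈ range n, |u k - v k| ^ p) ^ ((1:ℝ) / p)) ^ p
          ≤ (α ^ ((1 + p) / p)) ^ p :=
        Real.rpow_le_rpow (Real.rpow_nonneg hx0 _) hb hp0.le
      rw [← Real.rpow_mul hx0, ← Real.rpow_mul hα0.le, one_div p,
        inv_mul_cancel₀ hp0.ne', div_mul_cancel₀ _ hp0.ne', Real.rpow_one] at h2
      rw [← mul_le_mul_iff_right₀ (by positivity : (0:ℝ) < 1 / n)]
      calc 1 / (n:ℝ) * ∑ k ∈ range n, |u k - v k| ^ p ≤ α ^ (1 + p) := h2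
        _ = 1 / (n:ℝ) * ((n:ℝ) * α ^ (1+p)) := by field_simp
    have hk : ∀ k ∈ range n, (sbcCost (code v k) : ℝ) * α ^ p ≤ |u k - v k| ^ p := by
      intro k _
      set c : ℕ := sbcCost (code v k) with hc
      have h1 : (c : ℝ) * α ≤ |v k - u k| := by
        have h := sbcCode_cost hδ (v k - u k)
        rw [hα]
        exact h
      have h2 : ((c : ℝ) * α) ^ p ≤ |v k - u k| ^ p :=
        Real.rpow_le_rpow (by positivity) h1 hp0.le
      have h3 : ((c : ℝ) * α) ^ p = (c : ℝ) ^ p * α ^ p :=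
        Real.mul_rpow (by positivity) hα0.le
      have h4 : (c : ℝ) * α ^ p ≤ (c : ℝ) ^ p * α ^ p :=
        mul_le_mul_of_nonneg_right (nat_le_rpow hp c) hαp.le
      rw [abs_sub_comm]
      calc (c : ℝ) * α ^ p ≤ (c:ℝ)^p * α ^ p := h4
        _ = ((c:ℝ) * α) ^ p := h3.symm
        _ ≤ |v k - u k| ^ p := h2
    have hsum2 : (C v : ℝ) * α ^ p ≤ ((n:ℝ) * α) * α ^ p := by
      have e : (C v : ℝ) = ∑ k ∈ range n, (sbcCost (code v k) : ℝ) := by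
        rw [hC]; push_cast; rfl
      rw [e, Finset.sum_mul]
      calc ∑ k ∈ range n, (sbcCost (code v k) : ℝ) * α ^ p
          ≤ ∑ k ∈ range n, |u k - v k| ^ p := Finset.sum_le_sum hk
        _ ≤ (n : ℝ) * α ^ (1 + p) := hsum
        _ = ((n:ℝ) * α) * α ^ p := by
            rw [Real.rpow_add hα0, Real.rpow_one]; ring
    have := le_of_mul_le_mul_right hsum2 hαp
    rw [hm₀, hα] at *
    linarith
  -- injectivity
  set ψ : (ℕ → ℝ) → (Fin n → ℤ) := fun v k => code v (k : ℕ) with hψ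
  have hinj : ∀ v ∈ S, ∀ w ∈ S, ψ v = ψ w → v = w := by
    intro v hv w hw hvw
    by_contra hne
    have hsep := hSsep v hv w hw hne
    have hlt : ∀ k : Fin n, |v (k : ℕ) - w (k : ℕ)| < δ := by
      intro k
      have hceq : code v (k : ℕ) = code w (k : ℕ) := congrFun hvw k
      have h := sbcCode_close hδ (x := v (k:ℕ) - u (k:ℕ)) (y := w (k:ℕ) - u (k:ℕ)) hceq
      have e : (v (k:ℕ) - u (k:ℕ)) - (w (k:ℕ) - u (k:ℕ)) = v (k:ℕ) - w (k:ℕ) := by ring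
      rwa [e] at h
    have hne' : Nonempty (Fin n) := ⟨⟨0, hn⟩⟩
    obtain ⟨k₀, hk₀⟩ := Finite.exists_max (fun k : Fin n => |v (k : ℕ) - w (k : ℕ)|)
    have hle : dninf n v w ≤ |v (k₀ : ℕ) - w (k₀ : ℕ)| := ciSup_le hk₀
    have := hlt k₀
    linarith
  -- symbol set
  set P : Finset ℤ := (range n).image (fun a : ℕ => (a : ℤ) + 1) with hP
  set N : Finset ℤ := (range n).image (fun a : ℕ => -((a : ℤ) + 1)) with hN
  set J : Finset ℤ := insert 0 (P ∪ N) with hJ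
  have hψmem : ∀ v ∈ S, ψ v ∈ Fintype.piFinset (fun _ : Fin n => J) := by
    intro v hv
    rw [Fintype.mem_piFinset]
    intro k
    have hck : sbcCost (code v (k : ℕ)) ≤ C v := by
      rw [hC]
      exact Finset.single_le_sum (f := fun i => sbcCost (code v i))
        (fun i _ => Nat.zero_le _) (mem_range.mpr k.isLt)
    have hCn : (C v : ℝ) ≤ (n : ℝ) := by
      refine le_trans (hCost v hv) ?_
      rw [hm₀]; nlinarith
    have hCn' : C v ≤ n := by exact_mod_cast hCn
    have hcost_le : sbcCost (code v (k : ℕ)) ≤ n := le_trans hck hCn'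
    set j : ℤ := code v (k : ℕ) with hj
    rcases eq_or_ne j 0 with h0 | h0
    · rw [hJ]
      simp [hψ, ← hj, h0]
    · have habs : 1 ≤ j.natAbs ∧ j.natAbs ≤ n := by
        unfold sbcCost at hcost_le
        rw [if_neg h0] at hcost_le
        omega
      have hmem : ψ v k ∈ P ∪ N := by
        rcases lt_or_gt_of_ne h0 with hneg | hpos
        · refine Finset.mem_union_right _ ?_
          rw [hN]
          refine Finset.mem_image.mpr ⟨j.natAbs - 1, mem_range.mpr (by omega), ?_⟩
          have : ψ v k = j := rfl
          rw [this]
          omega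
        · refine Finset.mem_union_left _ ?_
          rw [hP]
          refine Finset.mem_image.mpr ⟨j.natAbs - 1, mem_range.mpr (by omega), ?_⟩
          have : ψ v k = j := rfl
          rw [this]
          omega
      rw [hJ]
      exact Finset.mem_insert_of_mem hmem
  set w : ℤ → ℝ := fun j => T ^ (sbcCost j) with hw
  have hw0 : ∀ j, 0 ≤ w j := fun j => by positivity
  have hJsum : ∑ j ∈ J, w j ≤ 1 + y := by
    have h0PN : (0 : ℤ) ∉ P ∪ N := by
      rw [Finset.mem_union, hP, hN]
      rintro (h | h) <;> obtain ⟨a, _, ha⟩ := Finset.mem_image.mp h <;> omega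
    have hdisj : Disjoint P N := by
      rw [Finset.disjoint_left]
      intro j hjP hjN
      rw [hP] at hjP; rw [hN] at hjN
      obtain ⟨a, _, ha⟩ := Finset.mem_image.mp hjP
      obtain ⟨b, _, hb⟩ := Finset.mem_image.mp hjN
      omega
    have hsP : ∑ j ∈ P, w j = ∑ a ∈ range n, T ^ (2 * a + 1) := by
      rw [hP, Finset.sum_image (by intro a _ b _ h; beta_reduce at h; omega)]
      exact Finset.sum_congr rfl fun a _ => by
        show T ^ sbcCost ((a : ℤ) + 1) = T ^ (2 * a + 1)
        rw [sbcCost_coe_succ]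
    have hsN : ∑ j ∈ N, w j = ∑ a ∈ range n, T ^ (2 * a + 1) := by
      rw [hN, Finset.sum_image (by intro a _ b _ h; beta_reduce at h; omega)]
      exact Finset.sum_congr rfl fun a _ => by
        show T ^ sbcCost (-((a : ℤ) + 1)) = T ^ (2 * a + 1)
        rw [sbcCost_neg, sbcCost_coe_succ]
    have hgeom := geom_tail_le hT0.le hT1 n
    have hw00 : w 0 = 1 := by
      show T ^ sbcCost 0 = 1
      simp [sbcCost]
    have h2T : 2 * (T / (1 - T ^ 2)) ≤ y := by
      have hden : (0:ℝ) < 1 - T ^ 2 := by nlinarith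
      rw [mul_div_assoc', div_le_iff₀ hden]
      have hTsq : T ^ 2 ≤ 1 / 9 := by nlinarith [hT3, hT0.le]
      have h1 : 2 * T ≤ (2 / 3) * y := by
        rw [hT]; nlinarith [hy0.le, hδ1]
      have h2 : (8 / 9) * y ≤ y * (1 - T ^ 2) := by nlinarith [hy0.le, hTsq]
      linarith
    rw [hJ, Finset.sum_insert h0PN, Finset.sum_union hdisj, hsP, hsN, hw00]
    linarith
  -- key counting inequality
  have key : (S.card : ℝ) * T ^ (m₀ : ℝ) ≤ (1 + y) ^ n := by
    have hstep1 : ∀ v ∈ S, T ^ (m₀ : ℝ) ≤ ∏ k : Fin n, w (ψ v k) := by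
      intro v hv
      have e1 : ∏ k : Fin n, w (ψ v k) = T ^ (C v) := by
        show ∏ k : Fin n, T ^ sbcCost (code v (k : ℕ)) = T ^ (C v)
        rw [Finset.prod_pow_eq_pow_sum]
        congr 1
        rw [hC]
        exact Fin.sum_univ_eq_sum_range (fun k => sbcCost (code v k)) n
      rw [e1, ← Real.rpow_natCast T (C v)]
      exact Real.rpow_le_rpow_of_exponent_ge hT0 hT1.le (hCost v hv)
    calc (S.card : ℝ) * T ^ (m₀ : ℝ) = ∑ _v ∈ S, T ^ (m₀ : ℝ) := by
          rw [Finset.sum_const, nsmul_eq_mul]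
      _ ≤ ∑ v ∈ S, ∏ k : Fin n, w (ψ v k) := Finset.sum_le_sum hstep1
      _ = ∑ g ∈ S.image ψ, ∏ k : Fin n, w (g k) := by
          rw [Finset.sum_image hinj]
      _ ≤ ∑ g ∈ Fintype.piFinset (fun _ : Fin n => J), ∏ k : Fin n, w (g k) := by
          refine Finset.sum_le_sum_of_subset_of_nonneg ?_ ?_
          · intro g hg
            obtain ⟨v, hv, rfl⟩ := Finset.mem_image.mp hg
            exact hψmem v hv
          · intro g _ _
            exact Finset.prod_nonneg fun k _ => hw0 _
      _ = ∏ _k : Fin n, ∑ j ∈ J, w j := (Finset.prod_univ_sum _ _).symm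
      _ = (∑ j ∈ J, w j) ^ n := by
          rw [Finset.prod_const, Finset.card_univ, Fintype.card_fin]
      _ ≤ (1 + y) ^ n := pow_le_pow_left₀ (Finset.sum_nonneg fun j _ => hw0 j) hJsum n
  -- final algebra
  have hTpos : 0 < T ^ (m₀ : ℝ) := Real.rpow_pos_of_pos hT0 m₀
  have hcard : (S.card : ℝ) ≤ (1 + y) ^ n * (T ^ (m₀ : ℝ))⁻¹ := by
    rw [← le_div_iff₀ hTpos] at key
    rwa [← div_eq_mul_inv]
  have hA : (T ^ (m₀ : ℝ))⁻¹ = (3 / δ) ^ (m₀ : ℝ) * (y ^ (m₀ : ℝ))⁻¹ := by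
    rw [hT, show δ * y / 3 = (δ / 3) * y by ring,
      Real.mul_rpow (by positivity) hy0.le, mul_inv]
    congr 1
    rw [← Real.inv_rpow (by positivity), inv_div]
  have hyα : y = α / (1 - α) := by
    rw [hy, hα]
    rw [div_eq_div_iff hδ2.ne' (by linarith : (0:ℝ) < 1 - δ / 2).ne']
    ring
  have h1y : 1 + y = (1 - α)⁻¹ := by
    have hne : (1 : ℝ) - α ≠ 0 := ne_of_gt h1α
    rw [hy]
    rw [hα] at hne ⊢
    field_simp
    ring
  have hmα : m₀ = α * n := by rw [hm₀, hα]; ring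
  have hrhs : (2 : ℝ) ^ (binEnt α * n) = α ^ (-(α * n)) * (1 - α) ^ (-((1 - α) * (n:ℝ))) := by
    rw [binEnt]
    have e : (-(α * Real.logb 2 α) - (1 - α) * Real.logb 2 (1 - α)) * (n : ℝ)
        = Real.logb 2 α * (-(α * n)) + Real.logb 2 (1 - α) * (-((1 - α) * (n:ℝ))) := by
      ring
    rw [e, Real.rpow_add two_pos,
      Real.rpow_mul (by norm_num : (0:ℝ) ≤ 2), Real.rpow_mul (by norm_num : (0:ℝ) ≤ 2),
      Real.rpow_logb two_pos (by norm_num) hα0, Real.rpow_logb two_pos (by norm_num) h1α]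
  have hlhs : ((1 + y) ^ n : ℝ) * (y ^ (m₀ : ℝ))⁻¹
      = α ^ (-(α * n)) * (1 - α) ^ (-((1 - α) * (n:ℝ))) := by
    have h1y0 : (0:ℝ) < 1 + y := by linarith
    have hlog1 : Real.log (1 + y) = -Real.log (1 - α) := by rw [h1y, Real.log_inv]
    have hlog2 : Real.log y = Real.log α - Real.log (1 - α) := by
      rw [hyα]; exact Real.log_div hα0.ne' (ne_of_gt h1α)
    have hL : (0:ℝ) < (1 + y) ^ n * (y ^ (m₀ : ℝ))⁻¹ :=
      mul_pos (pow_pos h1y0 n) (inv_pos.mpr (Real.rpow_pos_of_pos hy0 _))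
    have hR : (0:ℝ) < α ^ (-(α * (n:ℝ))) * (1 - α) ^ (-((1 - α) * (n:ℝ))) :=
      mul_pos (Real.rpow_pos_of_pos hα0 _) (Real.rpow_pos_of_pos h1α _)
    rw [← Real.exp_log hL, ← Real.exp_log hR]
    congr 1
    rw [Real.log_mul (pow_pos h1y0 n).ne' (inv_pos.mpr (Real.rpow_pos_of_pos hy0 _)).ne',
      Real.log_mul (Real.rpow_pos_of_pos hα0 _).ne' (Real.rpow_pos_of_pos h1α _).ne',
      Real.log_pow, Real.log_inv, Real.log_rpow hy0, Real.log_rpow hα0,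
      Real.log_rpow h1α, hlog1, hlog2, hmα]
    ring
  have hC3 : (3 / δ) ^ (m₀ : ℝ) ≤ (3 * K / δ) ^ (m₀ : ℝ) := by
    refine Real.rpow_le_rpow (by positivity) ?_ hm₀0.le
    gcongr
    linarith
  calc (S.card : ℝ) ≤ (1 + y) ^ n * (T ^ (m₀ : ℝ))⁻¹ := hcard
    _ = (3 / δ) ^ (m₀ : ℝ) * ((1 + y) ^ n * (y ^ (m₀ : ℝ))⁻¹) := by rw [hA]; ring
    _ = (3 / δ) ^ (m₀ : ℝ) * (2 : ℝ) ^ (binEnt α * n) := by rw [hlhs, hrhs]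
    _ ≤ (3 * K / δ) ^ (m₀ : ℝ) * (2 : ℝ) ^ (binEnt α * n) :=
        mul_le_mul_of_nonneg_right hC3 (Real.rpow_nonneg (by norm_num) _)
end

section
/- Let U ⊆ [-K,K]^ℕ with K ≥ 1, let δ ∈ (0,1), p ∈ [1,∞), and ε = (δ/2)^{(1+p)/p}. Then the covering number of U at radius δ under d_{n,∞} satisfies N(U, δ, d_{n,∞}) ≤ N(U, ε, d_{n,p}) · (3K/δ)^{δn/2} · 2^{H(δ/2)n}. -/
open Finset
open scoped ENNReal

/-- The covering number of `U` at radius `δ` with respect to the pseudo-metric `d`. -/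
noncomputable def coveringNumber (δ : ℝ) (d : (ℕ → ℝ) → (ℕ → ℝ) → ℝ)
    (U : Set (ℕ → ℝ)) : ℝ≥0∞ :=
  sInf {m : ℝ≥0∞ | ∃ C : Finset (ℕ → ℝ), (C.card : ℝ≥0∞) = m ∧
    ∀ u ∈ U, ∃ c ∈ C, d u c ≤ δ}

lemma two_rpow_binEnt (q : ℝ) (hq : 0 < q) (hq1 : q < 1) (t : ℝ) :
    (2:ℝ) ^ (binEnt q * t) = (q ^ (q*t) * (1-q) ^ ((1-q)*t))⁻¹ := by
  have h1 : (0:ℝ) < 1 - q := by linarith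
  have e : binEnt q * t = Real.logb 2 q * (-(q*t)) + Real.logb 2 (1-q) * (-((1-q)*t)) := by
    unfold binEnt; ring
  rw [e, Real.rpow_add (by norm_num : (0:ℝ) < 2),
    Real.rpow_mul (by norm_num : (0:ℝ) ≤ 2), Real.rpow_mul (by norm_num : (0:ℝ) ≤ 2),
    Real.rpow_logb (by norm_num) (by norm_num) hq,
    Real.rpow_logb (by norm_num) (by norm_num) h1,
    Real.rpow_neg hq.le, Real.rpow_neg h1.le, mul_inv]

lemma sum_choose_le_entropy (q : ℝ) (hq : 0 < q) (hq2 : q ≤ 1/2) (n m : ℕ)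
    (hm : (m : ℝ) ≤ q * n) :
    (∑ j ∈ range (m+1), (n.choose j : ℝ)) ≤ 2 ^ (binEnt q * n) := by
  have h1 : (0:ℝ) < 1 - q := by linarith
  have hqn : (m:ℝ) ≤ (n:ℝ) := by nlinarith [(Nat.cast_nonneg n : (0:ℝ) ≤ n)]
  have hmn : m ≤ n := by exact_mod_cast hqn
  set r : ℝ := q / (1-q) with hr
  have hr0 : 0 < r := div_pos hq h1
  have hr1 : r ≤ 1 := by rw [div_le_one h1]; linarith
  set P : ℝ := q ^ (q*(n:ℝ)) * (1-q) ^ ((1-q)*(n:ℝ)) with hP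
  have hP0 : 0 < P := mul_pos (Real.rpow_pos_of_pos hq _) (Real.rpow_pos_of_pos h1 _)
  -- pointwise bound
  have key : ∀ j ∈ range (m+1), (n.choose j : ℝ) * P ≤ q ^ j * (1-q) ^ (n - j) * n.choose j := by
    intro j hj
    rw [mem_range] at hj
    have hjm : (j:ℝ) ≤ q * n := le_trans (by exact_mod_cast Nat.lt_succ_iff.mp hj) hm
    have hjn : j ≤ n := le_trans (Nat.lt_succ_iff.mp hj) hmn
    have hPle : P ≤ q ^ j * (1-q) ^ (n - j) := by
      have e1 : P = (1-q) ^ (n:ℝ) * r ^ (q*(n:ℝ)) := by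
        rw [hP, hr, Real.div_rpow hq.le h1.le]
        have : (1-q) ^ ((1-q)*(n:ℝ)) = (1-q) ^ ((n:ℝ)) * ((1-q) ^ (q*(n:ℝ)))⁻¹ := by
          rw [← Real.rpow_neg h1.le, ← Real.rpow_add h1]; ring_nf
        rw [this]; field_simp
      have e2 : q ^ j * (1-q) ^ (n - j) = (1-q) ^ (n:ℝ) * r ^ ((j:ℝ)) := by
        rw [hr, Real.div_rpow hq.le h1.le, Real.rpow_natCast, Real.rpow_natCast,
          Real.rpow_natCast]
        rw [eq_comm]
        have : (1-q) ^ n = (1-q) ^ (n - j) * (1-q) ^ j := by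
          rw [← pow_add, Nat.sub_add_cancel hjn]
        rw [this]; field_simp
      rw [e1, e2]
      exact mul_le_mul_of_nonneg_left
        (Real.rpow_le_rpow_of_exponent_ge hr0 hr1 hjm)
        (Real.rpow_nonneg h1.le _)
    calc (n.choose j : ℝ) * P ≤ (n.choose j : ℝ) * (q ^ j * (1-q) ^ (n-j)) :=
          mul_le_mul_of_nonneg_left hPle (Nat.cast_nonneg _)
      _ = q ^ j * (1-q) ^ (n - j) * n.choose j := by ring
  have hsum : (∑ j ∈ range (m+1), (n.choose j : ℝ)) * P ≤ 1 := by
    rw [sum_mul]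
    calc ∑ j ∈ range (m+1), (n.choose j : ℝ) * P
        ≤ ∑ j ∈ range (m+1), q ^ j * (1-q) ^ (n - j) * n.choose j := sum_le_sum key
      _ ≤ ∑ j ∈ range (n+1), q ^ j * (1-q) ^ (n - j) * n.choose j := by
          apply sum_le_sum_of_subset_of_nonneg
          · exact range_subset_range.mpr (by omega)
          · intro j _ _
            positivity
      _ = (q + (1-q)) ^ n := (add_pow q (1-q) n).symm
      _ = 1 := by norm_num
  rw [two_rpow_binEnt q hq (by linarith) (n:ℝ)]
  show _ ≤ P⁻¹
  rw [← one_div, le_div_iff₀ hP0]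
  exact hsum


lemma card_small_subsets (n m : ℕ) :
    (((range n).powerset.filter (fun S => S.card ≤ m)).card : ℝ)
      ≤ ∑ j ∈ range (m+1), (n.choose j : ℝ) := by
  rw [← Nat.cast_sum]
  have h : ((range n).powerset.filter (fun S => S.card ≤ m)) ⊆
      (range (m+1)).biUnion (fun j => (range n).powersetCard j) := by
    intro S hS
    simp only [mem_filter, mem_powerset] at hS
    simp only [mem_biUnion, mem_range, mem_powersetCard]
    exact ⟨S.card, by omega, hS.1, rfl⟩
  have := card_le_card h
  refine Nat.cast_le.mpr (this.trans ?_)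
  refine (card_biUnion_le).trans ?_
  refine sum_le_sum fun j _ => ?_
  rw [card_powersetCard, card_range]

-- grid lemma
lemma grid_cover (K δ : ℝ) (hK : 1 ≤ K) (hδ : 0 < δ) (hδ1 : δ < 1) :
    ∃ G : Finset ℝ, ((G.card : ℝ) ≤ 2 * K / δ) ∧
      ∀ x ∈ Set.Icc (-K) K, ∃ y ∈ G, |x - y| ≤ δ := by
  set M := ⌊K/δ⌋₊ + 1 with hM
  refine ⟨(range M).image (fun j : ℕ => -K + δ * (2*(j:ℝ)+1)), ?_, ?_⟩
  · have h1 : ((range M).image (fun j : ℕ => -K + δ * (2*(j:ℝ)+1))).card ≤ M :=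
      (card_image_le).trans (by rw [card_range])
    have h2 : (M : ℝ) ≤ K/δ + 1 := by
      rw [hM]; push_cast
      have := Nat.floor_le (le_of_lt (div_pos (by linarith : (0:ℝ) < K) hδ))
      linarith
    have h3 : (1:ℝ) ≤ K/δ := by
      rw [le_div_iff₀ hδ]; linarith
    calc ((_ : Finset ℝ).card : ℝ) ≤ (M:ℝ) := by exact_mod_cast h1
      _ ≤ K/δ + 1 := h2
      _ ≤ 2*K/δ := by rw [div_add' _ _ _ (ne_of_gt hδ), div_le_div_iff_of_pos_right hδ]; linarith
  · intro x hx
    obtain ⟨hx1, hx2⟩ := hx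
    set j := ⌊(x+K)/(2*δ)⌋₊ with hj
    have h2δ : (0:ℝ) < 2*δ := by linarith
    have hxK : 0 ≤ x + K := by linarith
    have hjle : (j:ℝ) ≤ (x+K)/(2*δ) := Nat.floor_le (div_nonneg hxK h2δ.le)
    have hjgt : (x+K)/(2*δ) < j + 1 := Nat.lt_floor_add_one _
    refine ⟨-K + δ * (2*j+1), mem_image.mpr ⟨j, mem_range.mpr ?_, rfl⟩, ?_⟩
    · have : (j:ℝ) ≤ K/δ := by
        refine hjle.trans ?_
        rw [div_le_div_iff₀ h2δ hδ]; nlinarith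
      have : j ≤ ⌊K/δ⌋₊ := Nat.le_floor this
      omega
    · rw [abs_le]
      have hl : 2*δ*(j:ℝ) ≤ x+K := by rw [← le_div_iff₀' h2δ]; exact hjle
      have hu : x+K < 2*δ*((j:ℝ)+1) := by rw [← div_lt_iff₀' h2δ]; exact hjgt
      constructor <;> nlinarith

-- sInf attainment for covering numbers
lemma covering_attained (δ : ℝ) (d : (ℕ → ℝ) → (ℕ → ℝ) → ℝ) (U : Set (ℕ → ℝ))
    (C : Finset (ℕ → ℝ)) (hC : ∀ u ∈ U, ∃ c ∈ C, d u c ≤ δ) :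
    ∃ C₀ : Finset (ℕ → ℝ), (∀ u ∈ U, ∃ c ∈ C₀, d u c ≤ δ) ∧
      (C₀.card : ℝ≥0∞) = sInf {m : ℝ≥0∞ | ∃ C : Finset (ℕ → ℝ), (C.card : ℝ≥0∞) = m ∧
        ∀ u ∈ U, ∃ c ∈ C, d u c ≤ δ} := by
  set T : Set ℕ := {m : ℕ | ∃ C : Finset (ℕ → ℝ), C.card = m ∧ ∀ u ∈ U, ∃ c ∈ C, d u c ≤ δ}
    with hT
  have hTne : T.Nonempty := ⟨C.card, C, rfl, hC⟩
  obtain ⟨C₀, hC₀card, hC₀⟩ : sInf T ∈ T := Nat.sInf_mem hTne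
  refine ⟨C₀, hC₀, ?_⟩
  apply le_antisymm
  · exact le_sInf (by
      rintro m ⟨C', hcard, hcov⟩
      rw [← hcard, Nat.cast_le]
      rw [hC₀card]
      exact Nat.sInf_le ⟨C', rfl, hcov⟩)
  · exact sInf_le ⟨C₀, rfl, hC₀⟩

/-- Patch `c` on the set `S` using values `g`. -/
noncomputable def patchFn (c : ℕ → ℝ) (S : Finset ℕ) (g : (a : ℕ) → a ∈ S → ℝ) : ℕ → ℝ :=
  fun k => if h : k ∈ S then g k h else c k

theorem coveringNumber_dninf_le
    (K : ℝ) (hK : 1 ≤ K) (U : Set (ℕ → ℝ)) (hU : ∀ u ∈ U, ∀ k, u k ∈ Set.Icc (-K) K)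
    (δ : ℝ) (hδ : 0 < δ) (hδ1 : δ < 1) (p : ℝ) (hp : 1 ≤ p)
    (ε : ℝ) (hε : ε = (δ / 2) ^ ((1 + p) / p)) (n : ℕ) (hn : 1 ≤ n) :
    coveringNumber δ (dninf n) U ≤
      coveringNumber ε (dnp p n) U *
        ENNReal.ofReal ((3 * K / δ) ^ (δ * n / 2) * 2 ^ (binEnt (δ / 2) * n)) := by
  classical
  have h3Kδ : (0:ℝ) < 3 * K / δ := div_pos (by linarith) hδ
  have hFpos : (0:ℝ) < (3 * K / δ) ^ (δ * n / 2) * 2 ^ (binEnt (δ / 2) * n) :=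
    mul_pos (Real.rpow_pos_of_pos h3Kδ _) (Real.rpow_pos_of_pos (by norm_num) _)
  set Freal : ℝ := (3 * K / δ) ^ (δ * n / 2) * 2 ^ (binEnt (δ / 2) * n) with hFreal
  set F : ℝ≥0∞ := ENNReal.ofReal Freal with hF
  have hF0 : F ≠ 0 := by
    rw [hF, ne_eq, ENNReal.ofReal_eq_zero, not_le]; exact hFpos
  by_cases hcov : ∃ C : Finset (ℕ → ℝ), ∀ u ∈ U, ∃ c ∈ C, dnp p n u c ≤ ε
  swap
  · have hempty : {m : ℝ≥0∞ | ∃ C : Finset (ℕ → ℝ), (C.card : ℝ≥0∞) = m ∧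
        ∀ u ∈ U, ∃ c ∈ C, dnp p n u c ≤ ε} = ∅ := by
      ext m
      simp only [Set.mem_setOf_eq, Set.mem_empty_iff_false, iff_false, not_exists]
      rintro C ⟨-, hCc⟩
      exact hcov ⟨C, hCc⟩
    have htop : coveringNumber ε (dnp p n) U = ⊤ := by
      rw [coveringNumber, hempty, sInf_empty]
    rw [htop, ENNReal.top_mul hF0]
    exact le_top
  obtain ⟨C, hC⟩ := hcov
  obtain ⟨C₀, hC₀cov, hC₀card⟩ := covering_attained ε (dnp p n) U C hC
  have hp0 : (0:ℝ) < p := by linarith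
  have hn0 : (0:ℝ) < (n:ℝ) := by exact_mod_cast hn
  set q : ℝ := δ / 2 with hq
  have hq0 : 0 < q := by rw [hq]; linarith
  have hq2 : q ≤ 1/2 := by rw [hq]; linarith
  set m : ℕ := ⌊q * n⌋₊ with hm
  have hmqn : (m : ℝ) ≤ q * n := Nat.floor_le (by positivity)
  obtain ⟨G, hGcard, hGcov⟩ := grid_cover K δ hK hδ hδ1
  have hGne : G.Nonempty := by
    obtain ⟨y, hy, -⟩ := hGcov 0 ⟨by linarith, by linarith⟩
    exact ⟨y, hy⟩
  set Ssets : Finset (Finset ℕ) := (range n).powerset.filter (fun S => S.card ≤ m)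
    with hSsets
  set C' : Finset (ℕ → ℝ) :=
    C₀.biUnion (fun c => Ssets.biUnion (fun S => (S.pi (fun _ => G)).image (patchFn c S)))
    with hC'
  -- C' is a δ-cover for dninf
  have hC'cov : ∀ u ∈ U, ∃ c ∈ C', dninf n u c ≤ δ := by
    intro u hu
    obtain ⟨c, hcC, hcd⟩ := hC₀cov u hu
    set S : Finset ℕ := (range n).filter (fun k => δ/2 < |u k - c k|) with hS
    -- bound on the sum
    have hsum : ∑ k ∈ range n, |u k - c k| ^ p ≤ (n : ℝ) * (δ/2) ^ (1+p) := by
      have hbase : (0:ℝ) ≤ (1 / (n : ℝ)) * ∑ k ∈ range n, |u k - c k| ^ p := by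
        apply mul_nonneg (by positivity)
        exact Finset.sum_nonneg fun k _ => Real.rpow_nonneg (abs_nonneg _) _
      rw [dnp] at hcd
      have h1 := Real.rpow_le_rpow (Real.rpow_nonneg hbase _) hcd (le_of_lt hp0)
      rw [← Real.rpow_mul hbase, one_div_mul_cancel (ne_of_gt hp0), Real.rpow_one,
        hε, ← Real.rpow_mul (by linarith : (0:ℝ) ≤ δ/2),
        div_mul_cancel₀ _ (ne_of_gt hp0)] at h1
      have h2 := mul_le_mul_of_nonneg_left h1 (le_of_lt hn0)
      calc ∑ k ∈ range n, |u k - c k| ^ p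
          = (n:ℝ) * ((1 / (n : ℝ)) * ∑ k ∈ range n, |u k - c k| ^ p) := by
            field_simp
        _ ≤ (n:ℝ) * (δ/2) ^ (1+p) := h2
    -- bound on the card of S
    have hScard : S.card ≤ m := by
      have hlow : (S.card : ℝ) * (δ/2) ^ p ≤ ∑ k ∈ S, |u k - c k| ^ p := by
        calc (S.card : ℝ) * (δ/2) ^ p = ∑ _k ∈ S, (δ/2) ^ p := by
              rw [Finset.sum_const, nsmul_eq_mul]
          _ ≤ ∑ k ∈ S, |u k - c k| ^ p := by
              refine Finset.sum_le_sum fun k hk => ?_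
              rw [hS, mem_filter] at hk
              exact Real.rpow_le_rpow (by linarith) (le_of_lt hk.2) (le_of_lt hp0)
      have hmid : ∑ k ∈ S, |u k - c k| ^ p ≤ ∑ k ∈ range n, |u k - c k| ^ p := by
        refine Finset.sum_le_sum_of_subset_of_nonneg (filter_subset _ _) ?_
        intro k _ _
        exact Real.rpow_nonneg (abs_nonneg _) _
      have hfin : (S.card : ℝ) * (δ/2) ^ p ≤ ((n:ℝ) * (δ/2)) * (δ/2) ^ p := by
        have e : (n:ℝ) * (δ/2) ^ (1+p) = ((n:ℝ) * (δ/2)) * (δ/2) ^ p := by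
          rw [Real.rpow_add (by linarith : (0:ℝ) < δ/2), Real.rpow_one]; ring
        calc (S.card : ℝ) * (δ/2) ^ p ≤ (n:ℝ) * (δ/2) ^ (1+p) :=
              le_trans hlow (le_trans hmid hsum)
          _ = ((n:ℝ) * (δ/2)) * (δ/2) ^ p := e
      have hScr : (S.card : ℝ) ≤ (n:ℝ) * (δ/2) :=
        le_of_mul_le_mul_right hfin (Real.rpow_pos_of_pos (by linarith) _)
      rw [hm]
      refine Nat.le_floor ?_
      calc (S.card : ℝ) ≤ (n:ℝ) * (δ/2) := hScr
        _ = q * n := by rw [hq]; ring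
    have hSmem : S ∈ Ssets := by
      rw [hSsets, mem_filter, mem_powerset]
      exact ⟨filter_subset _ _, hScard⟩
    -- choose grid points
    have hgrid : ∀ k : ℕ, ∃ y ∈ G, |u k - y| ≤ δ := fun k => hGcov (u k) (hU u hu k)
    set g : (a : ℕ) → a ∈ S → ℝ := fun k _ => (hgrid k).choose with hg
    have hg1 : ∀ k (h : k ∈ S), g k h ∈ G := fun k _ => (hgrid k).choose_spec.1
    have hg2 : ∀ k (h : k ∈ S), |u k - g k h| ≤ δ := fun k _ => (hgrid k).choose_spec.2
    refine ⟨patchFn c S g, ?_, ?_⟩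
    · rw [hC']
      refine mem_biUnion.mpr ⟨c, hcC, mem_biUnion.mpr ⟨S, hSmem, mem_image.mpr
        ⟨g, ?_, rfl⟩⟩⟩
      exact Finset.mem_pi.mpr hg1
    · rw [dninf]
      have : Nonempty (Fin n) := ⟨⟨0, hn⟩⟩
      apply ciSup_le
      intro k
      by_cases hkS : (k:ℕ) ∈ S
      · rw [patchFn, dif_pos hkS]
        exact hg2 _ hkS
      · rw [patchFn, dif_neg hkS]
        have hk : (k:ℕ) ∈ range n := mem_range.mpr k.isLt
        have : ¬ (δ/2 < |u (k:ℕ) - c (k:ℕ)|) := fun h => hkS (by rw [hS, mem_filter]; exact ⟨hk, h⟩)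
        push_neg at this
        linarith
  -- cardinality bound
  have hcard1 : C'.card ≤ C₀.card * (Ssets.card * G.card ^ m) := by
    calc C'.card
        ≤ ∑ c ∈ C₀, (Ssets.biUnion (fun S => (S.pi (fun _ => G)).image (patchFn c S))).card :=
          card_biUnion_le
      _ ≤ ∑ c ∈ C₀, ∑ S ∈ Ssets, ((S.pi (fun _ => G)).image (patchFn c S)).card :=
          Finset.sum_le_sum fun c _ => card_biUnion_le
      _ ≤ ∑ c ∈ C₀, ∑ S ∈ Ssets, G.card ^ m := by
          refine Finset.sum_le_sum fun c _ => Finset.sum_le_sum fun S hSm => ?_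
          refine card_image_le.trans ?_
          rw [Finset.card_pi, Finset.prod_const]
          refine Nat.pow_le_pow_right hGne.card_pos ?_
          rw [hSsets, mem_filter] at hSm
          exact hSm.2
      _ = C₀.card * (Ssets.card * G.card ^ m) := by
          simp [Finset.sum_const, mul_assoc]
  have hcard2 : (C'.card : ℝ) ≤ (C₀.card : ℝ) * Freal := by
    have hA : ((G.card ^ m : ℕ) : ℝ) ≤ (3 * K / δ) ^ (δ * n / 2) := by
      push_cast
      calc ((G.card : ℝ)) ^ m ≤ (2 * K / δ) ^ m :=
            pow_le_pow_left₀ (Nat.cast_nonneg _) hGcard m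
        _ ≤ (3 * K / δ) ^ m := by
            refine pow_le_pow_left₀ (by positivity) ?_ m
            rw [div_eq_mul_inv, div_eq_mul_inv]
            exact mul_le_mul_of_nonneg_right (by linarith) (by positivity)
        _ = (3 * K / δ) ^ (m : ℝ) := (Real.rpow_natCast _ m).symm
        _ ≤ (3 * K / δ) ^ (δ * n / 2) := by
            refine Real.rpow_le_rpow_of_exponent_le ?_ ?_
            · rw [le_div_iff₀ hδ]; linarith
            · calc (m:ℝ) ≤ q * n := hmqn
                _ = δ * n / 2 := by rw [hq]; ring
    have hB : ((Ssets.card : ℕ) : ℝ) ≤ 2 ^ (binEnt (δ/2) * n) := by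
      calc ((Ssets.card : ℕ) : ℝ) ≤ ∑ j ∈ range (m+1), (n.choose j : ℝ) :=
            card_small_subsets n m
        _ ≤ 2 ^ (binEnt q * n) := sum_choose_le_entropy q hq0 hq2 n m hmqn
        _ = 2 ^ (binEnt (δ/2) * n) := by rw [hq]
    calc (C'.card : ℝ) ≤ ((C₀.card * (Ssets.card * G.card ^ m) : ℕ) : ℝ) := by
          exact_mod_cast hcard1
      _ = (C₀.card : ℝ) * ((Ssets.card : ℝ) * ((G.card ^ m : ℕ) : ℝ)) := by push_cast; ring
      _ ≤ (C₀.card : ℝ) * ((2 ^ (binEnt (δ/2) * n)) * ((3 * K / δ) ^ (δ * n / 2))) := by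
          refine mul_le_mul_of_nonneg_left ?_ (Nat.cast_nonneg _)
          exact mul_le_mul hB hA (Nat.cast_nonneg _) (by positivity)
      _ = (C₀.card : ℝ) * Freal := by rw [hFreal]; ring
  -- conclude
  calc coveringNumber δ (dninf n) U ≤ (C'.card : ℝ≥0∞) := by
        rw [coveringNumber]
        exact sInf_le ⟨C', rfl, hC'cov⟩
    _ ≤ (C₀.card : ℝ≥0∞) * F := by
        rw [← ENNReal.ofReal_natCast C'.card, ← ENNReal.ofReal_natCast C₀.card, hF,
          ← ENNReal.ofReal_mul (Nat.cast_nonneg _)]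
        exact ENNReal.ofReal_le_ofReal hcard2
    _ = coveringNumber ε (dnp p n) U * F := by rw [hC₀card, coveringNumber]
end

section
/- For any uniformly bounded set of infinite real sequences U ⊆ [-K,K]^ℕ, the ℓ_p entropies h_p(U) = lim_{r→0⁺} limsup_n n^{-1} log N(U, r, d_{n,p}) are equal for all 1 ≤ p ≤ ∞. -/
open Finset Filter
open scoped ENNReal

/-- The exponential growth rate of the ℓ_p covering numbers of `U` at radius `r`. -/
noncomputable def entropyAtScale (U : Set (ℕ → ℝ)) (d : ℕ → (ℕ → ℝ) → (ℕ → ℝ) → ℝ)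
    (r : ℝ) : ℝ :=
  limsup (fun n : ℕ => Real.log (coveringNumber r (d n) U).toReal / n) atTop

/-- The entropy of `U` with respect to the family of pseudo-metrics `d n`:
since `entropyAtScale` is nonincreasing in `r`, the limit as `r ↘ 0` equals the
supremum over all `r > 0`. -/
noncomputable def seqEntropy (U : Set (ℕ → ℝ)) (d : ℕ → (ℕ → ℝ) → (ℕ → ℝ) → ℝ) : ℝ :=
  sSup {a : ℝ | ∃ r > 0, a = entropyAtScale U d r}


lemma dninf_nonneg (n : ℕ) (u v : ℕ → ℝ) : 0 ≤ dninf n u v :=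
  Real.iSup_nonneg fun _ => abs_nonneg _

lemma abs_le_dninf {n k : ℕ} (hk : k < n) (u v : ℕ → ℝ) :
    |u k - v k| ≤ dninf n u v :=
  le_ciSup (f := fun k : Fin n => |u (k:ℕ) - v (k:ℕ)|)
    (Set.Finite.bddAbove (Set.finite_range _)) (⟨k, hk⟩ : Fin n)

lemma dninf_le {n : ℕ} {δ : ℝ} {u v : ℕ → ℝ} (hδ : 0 ≤ δ)
    (h : ∀ k < n, |u k - v k| ≤ δ) : dninf n u v ≤ δ :=
  Real.iSup_le (fun k => h k k.2) hδ

lemma sum_abs_rpow_le {p : ℝ} (hp : 1 ≤ p) {n : ℕ} {u v : ℕ → ℝ} {δ : ℝ}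
    (hδ : 0 ≤ δ) (hd : dnp p n u v ≤ δ) :
    ∑ k ∈ Finset.range n, |u k - v k| ^ p ≤ n * δ ^ p := by
  have hp0 : 0 < p := lt_of_lt_of_le one_pos hp
  rcases Nat.eq_zero_or_pos n with hn | hn
  · simp [hn]
  have hS : 0 ≤ ∑ k ∈ Finset.range n, |u k - v k| ^ p :=
    Finset.sum_nonneg fun k _ => Real.rpow_nonneg (abs_nonneg _) p
  have hn' : (0:ℝ) < n := by exact_mod_cast hn
  have h1 : ((1 / (n:ℝ)) * ∑ k ∈ Finset.range n, |u k - v k| ^ p) ≤ δ ^ p := by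
    have hbase : 0 ≤ (1 / (n:ℝ)) * ∑ k ∈ Finset.range n, |u k - v k| ^ p :=
      mul_nonneg (by positivity) hS
    have := Real.rpow_le_rpow (Real.rpow_nonneg hbase _) hd hp0.le
    rwa [← Real.rpow_mul hbase, one_div_mul_cancel hp0.ne', Real.rpow_one] at this
  calc ∑ k ∈ Finset.range n, |u k - v k| ^ p
      = n * ((1 / (n:ℝ)) * ∑ k ∈ Finset.range n, |u k - v k| ^ p) := by
        field_simp
    _ ≤ n * δ ^ p := by
        exact mul_le_mul_of_nonneg_left h1 hn'.le

lemma dnp_le_dninf {p : ℝ} (hp : 1 ≤ p) (n : ℕ) (u v : ℕ → ℝ) :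
    dnp p n u v ≤ dninf n u v := by
  have hp0 : 0 < p := lt_of_lt_of_le one_pos hp
  have hM : 0 ≤ dninf n u v := dninf_nonneg n u v
  rcases Nat.eq_zero_or_pos n with hn | hn
  · subst hn
    simp only [dnp, Nat.cast_zero, div_zero, Finset.range_zero, Finset.sum_empty,
      zero_mul, mul_zero]
    rw [Real.zero_rpow (by positivity : (1:ℝ)/p ≠ 0)]
    exact hM
  have hn' : (0:ℝ) < n := by exact_mod_cast hn
  have hsum : ∑ k ∈ Finset.range n, |u k - v k| ^ p ≤ n * (dninf n u v) ^ p := by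
    calc ∑ k ∈ Finset.range n, |u k - v k| ^ p
        ≤ ∑ k ∈ Finset.range n, (dninf n u v) ^ p :=
          Finset.sum_le_sum fun k hk =>
            Real.rpow_le_rpow (abs_nonneg _) (abs_le_dninf (Finset.mem_range.mp hk) u v) hp0.le
      _ = n * (dninf n u v) ^ p := by rw [Finset.sum_const, Finset.card_range,
          nsmul_eq_mul]
  have h1 : (1 / (n:ℝ)) * ∑ k ∈ Finset.range n, |u k - v k| ^ p ≤ (dninf n u v) ^ p := by
    rw [div_mul_eq_mul_div, one_mul, div_le_iff₀ hn']
    linarith [hsum]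
  have hbase : 0 ≤ (1 / (n:ℝ)) * ∑ k ∈ Finset.range n, |u k - v k| ^ p :=
    mul_nonneg (by positivity) (Finset.sum_nonneg fun k _ => Real.rpow_nonneg (abs_nonneg _) p)
  calc dnp p n u v ≤ ((dninf n u v) ^ p) ^ (1/p) :=
        Real.rpow_le_rpow hbase h1 (by positivity)
    _ = dninf n u v := by
        rw [← Real.rpow_mul hM, mul_one_div, div_self hp0.ne', Real.rpow_one]

lemma coveringNumber_le_card {δ : ℝ} {d : (ℕ → ℝ) → (ℕ → ℝ) → ℝ} {U : Set (ℕ → ℝ)}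
    {C : Finset (ℕ → ℝ)} (h : ∀ u ∈ U, ∃ c ∈ C, d u c ≤ δ) :
    coveringNumber δ d U ≤ C.card :=
  sInf_le ⟨C, rfl, h⟩

lemma coveringNumber_mono_d {δ : ℝ} {d1 d2 : (ℕ → ℝ) → (ℕ → ℝ) → ℝ} {U : Set (ℕ → ℝ)}
    (h : ∀ u v, d1 u v ≤ d2 u v) :
    coveringNumber δ d1 U ≤ coveringNumber δ d2 U := by
  apply sInf_le_sInf
  rintro m ⟨C, hC, hcov⟩
  exact ⟨C, hC, fun u hu => by obtain ⟨c, hc, hd⟩ := hcov u hu; exact ⟨c, hc, (h u c).trans hd⟩⟩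

lemma one_le_coveringNumber {δ : ℝ} {d : (ℕ → ℝ) → (ℕ → ℝ) → ℝ} {U : Set (ℕ → ℝ)}
    (hU : U.Nonempty) : 1 ≤ coveringNumber δ d U := by
  apply le_sInf
  rintro m ⟨C, rfl, hcov⟩
  obtain ⟨u, hu⟩ := hU
  obtain ⟨c, hc, -⟩ := hcov u hu
  have : 1 ≤ C.card := Finset.card_pos.mpr ⟨c, hc⟩
  exact_mod_cast this

lemma exists_cover_eq {δ : ℝ} {d : (ℕ → ℝ) → (ℕ → ℝ) → ℝ} {U : Set (ℕ → ℝ)}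
    (hne : ∃ C : Finset (ℕ → ℝ), ∀ u ∈ U, ∃ c ∈ C, d u c ≤ δ) :
    ∃ C : Finset (ℕ → ℝ), (∀ u ∈ U, ∃ c ∈ C, d u c ≤ δ) ∧
      (C.card : ℝ≥0∞) = coveringNumber δ d U := by
  classical
  have hne' : ∃ m : ℕ, ∃ C : Finset (ℕ → ℝ), C.card = m ∧ ∀ u ∈ U, ∃ c ∈ C, d u c ≤ δ := by
    obtain ⟨C, hC⟩ := hne; exact ⟨C.card, C, rfl, hC⟩
  obtain ⟨C, hcard, hcov⟩ := Nat.find_spec hne'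
  refine ⟨C, hcov, le_antisymm ?_ (coveringNumber_le_card hcov)⟩
  apply le_sInf
  rintro m ⟨C', rfl, hcov'⟩
  have : Nat.find hne' ≤ C'.card := Nat.find_min' hne' ⟨C', rfl, hcov'⟩
  rw [hcard]
  exact_mod_cast this

noncomputable def gridPt (K ε : ℝ) (i : ℕ) : ℝ := -K + (2 * i + 1) * ε

lemma grid_approx {K ε x : ℝ} (hK : 0 < K) (hε : 0 < ε) (hx : x ∈ Set.Icc (-K) K) :
    ∃ i < ⌈K / ε⌉₊, |x - gridPt K ε i| ≤ ε := by
  obtain ⟨hx1, hx2⟩ := hx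
  set G : ℕ := ⌈K / ε⌉₊ with hG
  have hG1 : 1 ≤ G := Nat.one_le_ceil_iff.mpr (by positivity)
  have hKG : K ≤ G * ε := by
    have := Nat.le_ceil (K / ε)
    calc K = (K / ε) * ε := by field_simp
      _ ≤ G * ε := by apply mul_le_mul_of_nonneg_right this hε.le
  set j : ℕ := ⌊(x + K) / (2 * ε)⌋₊ with hj
  refine ⟨min j (G - 1), ?_, ?_⟩
  · have : min j (G - 1) ≤ G - 1 := min_le_right _ _
    omega
  set i : ℕ := min j (G - 1) with hi
  have hxK : 0 ≤ x + K := by linarith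
  have hlow : 2 * (i : ℝ) * ε ≤ x + K := by
    have h1 : (i : ℝ) ≤ j := by exact_mod_cast min_le_left j (G - 1)
    have h2 : (j : ℝ) ≤ (x + K) / (2 * ε) := Nat.floor_le (by positivity)
    have := h1.trans h2
    rw [le_div_iff₀ (by positivity)] at this
    linarith
  have hup : x + K ≤ 2 * ((i : ℝ) + 1) * ε := by
    rcases le_total j (G - 1) with hc | hc
    · have hij : i = j := min_eq_left hc
      have h2 : (x + K) / (2 * ε) < (j : ℝ) + 1 := Nat.lt_floor_add_one _
      rw [div_lt_iff₀ (by positivity)] at h2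
      rw [hij]
      linarith
    · have hij : i = G - 1 := min_eq_right hc
      have : ((i : ℝ) + 1) = (G : ℝ) := by
        rw [hij]
        have : (G - 1 : ℕ) + 1 = G := by omega
        exact_mod_cast congrArg (Nat.cast (R := ℝ)) this
      rw [this]
      linarith
  rw [abs_le]
  constructor
  · simp only [gridPt]; nlinarith
  · simp only [gridPt]; nlinarith

/-- Grid cover of `U` in `dninf n` of cardinality `⌈K/ε⌉₊ ^ n`. -/
lemma exists_dninf_cover {K ε : ℝ} (hK : 0 < K) (hε : 0 < ε) {U : Set (ℕ → ℝ)}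
    (hU : ∀ u ∈ U, ∀ k, u k ∈ Set.Icc (-K) K) (n : ℕ) :
    ∃ C : Finset (ℕ → ℝ), (∀ u ∈ U, ∃ c ∈ C, dninf n u c ≤ ε) ∧
      C.card ≤ ⌈K / ε⌉₊ ^ n := by
  classical
  set G : ℕ := ⌈K / ε⌉₊ with hG
  have hG1 : 1 ≤ G := Nat.one_le_ceil_iff.mpr (by positivity)
  set Φ : (Fin n → Fin G) → (ℕ → ℝ) :=
    fun f k => if h : k < n then gridPt K ε (f ⟨k, h⟩) else 0 with hΦ
  refine ⟨(Fintype.piFinset fun _ : Fin n => (Finset.univ : Finset (Fin G))).image Φ, ?_, ?_⟩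
  · intro u hu
    have hsel : ∀ k : Fin n, ∃ i < G, |u k - gridPt K ε i| ≤ ε :=
      fun k => grid_approx hK hε (hU u hu k)
    choose idx hidx habs using hsel
    refine ⟨Φ (fun k => ⟨idx k, hidx k⟩), Finset.mem_image_of_mem _ (by simp), ?_⟩
    apply dninf_le hε.le
    intro k hk
    have : Φ (fun k => ⟨idx k, hidx k⟩) k = gridPt K ε (idx ⟨k, hk⟩) := by
      simp [hΦ, hk]
    rw [this]
    exact habs ⟨k, hk⟩
  · calc ((Fintype.piFinset fun _ : Fin n => (Finset.univ : Finset (Fin G))).image Φ).card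
        ≤ (Fintype.piFinset fun _ : Fin n => (Finset.univ : Finset (Fin G))).card :=
          Finset.card_image_le
      _ = G ^ n := by simp [Fintype.card_piFinset]

/-- The set of "repair patterns": functions `Fin n → Fin (G+1)` with at most `s`
coordinates different from `Fin.last G`. -/
noncomputable def Tset (n G s : ℕ) : Finset (Fin n → Fin (G + 1)) := by
  classical
  exact (Fintype.piFinset fun _ : Fin n => (Finset.univ : Finset (Fin (G + 1)))).filter
    (fun f => ((Finset.univ.filter (fun k => f k ≠ Fin.last G)).card ≤ s))

lemma Tset_nonempty (n G s : ℕ) : (fun _ => Fin.last G) ∈ Tset n G s := by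
  classical
  simp [Tset]

lemma Tset_card_le {t : ℝ} (ht0 : 0 < t) (ht1 : t ≤ 1) (n G s : ℕ) :
    ((Tset n G s).card : ℝ) ≤ t⁻¹ ^ s * (1 + G * t) ^ n := by
  classical
  have key : ∀ f ∈ Tset n G s,
      t ^ s ≤ ∏ k : Fin n, (if f k ≠ Fin.last G then t else 1) := by
    intro f hf
    have hcard : (Finset.univ.filter (fun k => f k ≠ Fin.last G)).card ≤ s := by
      simpa [Tset] using hf
    have hprod : ∏ k : Fin n, (if f k ≠ Fin.last G then t else 1)
        = t ^ (Finset.univ.filter (fun k => f k ≠ Fin.last G)).card := by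
      rw [← Finset.prod_filter_mul_prod_filter_not Finset.univ (fun k => f k ≠ Fin.last G)]
      rw [Finset.prod_congr rfl (fun k hk => if_pos (Finset.mem_filter.mp hk).2),
        Finset.prod_congr rfl (fun k hk => if_neg (Finset.mem_filter.mp hk).2)]
      simp
    rw [hprod]
    exact pow_le_pow_of_le_one ht0.le ht1 hcard
  have hsum : ((Tset n G s).card : ℝ) * t ^ s ≤ (1 + G * t) ^ n := by
    calc ((Tset n G s).card : ℝ) * t ^ s = ∑ _f ∈ Tset n G s, t ^ s := by
          rw [Finset.sum_const, nsmul_eq_mul]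
      _ ≤ ∑ f ∈ Tset n G s, ∏ k : Fin n, (if f k ≠ Fin.last G then t else 1) :=
          Finset.sum_le_sum key
      _ ≤ ∑ f ∈ (Fintype.piFinset fun _ : Fin n => (Finset.univ : Finset (Fin (G + 1)))),
            ∏ k : Fin n, (if f k ≠ Fin.last G then t else 1) := by
          apply Finset.sum_le_sum_of_subset_of_nonneg (Finset.filter_subset _ _)
          intro f _ _
          exact Finset.prod_nonneg fun k _ => by positivity
      _ = ∏ _k : Fin n, ∑ v : Fin (G + 1), (if v ≠ Fin.last G then t else 1) := by
          rw [Finset.prod_univ_sum]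
      _ = (1 + G * t) ^ n := by
          have : ∑ v : Fin (G + 1), (if v ≠ Fin.last G then t else 1) = 1 + G * t := by
            rw [Fin.sum_univ_castSucc]
            have h1 : ∀ i : Fin G, (if (Fin.castSucc i) ≠ Fin.last G then t else 1) = t :=
              fun i => if_pos (by simp [Fin.ext_iff]; omega)
            simp only [h1, if_neg (by simp : ¬ (Fin.last G ≠ Fin.last G))]
            rw [Finset.sum_const]
            simp only [Finset.card_univ, Fintype.card_fin, nsmul_eq_mul]
            ring
          rw [this, Finset.prod_const]
          simp
  have hts : (0:ℝ) < t ^ s := by positivity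
  rw [← mul_le_mul_iff_of_pos_right hts]
  calc ((Tset n G s).card : ℝ) * t ^ s ≤ (1 + G * t) ^ n := hsum
    _ = t⁻¹ ^ s * (1 + G * t) ^ n * t ^ s := by
        rw [mul_comm (t⁻¹ ^ s), mul_assoc, ← mul_pow, inv_mul_cancel₀ ht0.ne', one_pow, mul_one]

lemma refine_cover {K p ε α : ℝ} (hK : 1 ≤ K) (hp : 1 ≤ p) (hε : 0 < ε)
    (hα0 : 0 < α) {U : Set (ℕ → ℝ)}
    (hU : ∀ u ∈ U, ∀ k, u k ∈ Set.Icc (-K) K) {n : ℕ}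
    {C : Finset (ℕ → ℝ)} (hC : ∀ u ∈ U, ∃ c ∈ C, dnp p n u c ≤ ε * α ^ (1 / p)) :
    ∃ C' : Finset (ℕ → ℝ), (∀ u ∈ U, ∃ c ∈ C', dninf n u c ≤ ε) ∧
      C'.card ≤ C.card * (Tset n ⌈K / ε⌉₊ ⌊α * n⌋₊).card := by
  classical
  have hp0 : 0 < p := lt_of_lt_of_le one_pos hp
  have hK0 : 0 < K := lt_of_lt_of_le one_pos hK
  set G : ℕ := ⌈K / ε⌉₊ with hG
  set s : ℕ := ⌊α * n⌋₊ with hs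
  set Φ : (ℕ → ℝ) × (Fin n → Fin (G + 1)) → (ℕ → ℝ) :=
    fun cf k => if h : k < n then
      (if ((cf.2 ⟨k, h⟩ : ℕ) < G) then gridPt K ε (cf.2 ⟨k, h⟩) else cf.1 k)
      else cf.1 k with hΦ
  refine ⟨(C ×ˢ Tset n G s).image Φ, ?_, ?_⟩
  · intro u hu
    obtain ⟨c, hc, hd⟩ := hC u hu
    have hδ0 : 0 ≤ ε * α ^ (1 / p) := by positivity
    have hsum : ∑ k ∈ Finset.range n, |u k - c k| ^ p ≤ n * (ε * α ^ (1 / p)) ^ p :=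
      sum_abs_rpow_le hp hδ0 hd
    have hδp : (ε * α ^ (1 / p)) ^ p = ε ^ p * α := by
      rw [Real.mul_rpow hε.le (Real.rpow_nonneg hα0.le _), ← Real.rpow_mul hα0.le,
        one_div_mul_cancel hp0.ne', Real.rpow_one]
    rw [hδp] at hsum
    set bad : Finset (Fin n) := Finset.univ.filter (fun k : Fin n => ε < |u k - c k|)
      with hbad
    have hεp : (0:ℝ) < ε ^ p := Real.rpow_pos_of_pos hε p
    have hbadcard : (bad.card : ℝ) * ε ^ p ≤ (n : ℝ) * (ε ^ p * α) := by
      calc (bad.card : ℝ) * ε ^ p = ∑ _k ∈ bad, ε ^ p := by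
            rw [Finset.sum_const, nsmul_eq_mul]
        _ ≤ ∑ k ∈ bad, |u k - c k| ^ p := by
            apply Finset.sum_le_sum
            intro k hk
            have : ε < |u k - c k| := (Finset.mem_filter.mp hk).2
            exact Real.rpow_le_rpow hε.le this.le hp0.le
        _ ≤ ∑ k : Fin n, |u (k:ℕ) - c (k:ℕ)| ^ p := by
            apply Finset.sum_le_sum_of_subset_of_nonneg (Finset.filter_subset _ _)
            intro k _ _
            exact Real.rpow_nonneg (abs_nonneg _) p
        _ = ∑ k ∈ Finset.range n, |u k - c k| ^ p :=
            Fin.sum_univ_eq_sum_range (fun k => |u k - c k| ^ p) n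
        _ ≤ (n : ℝ) * (ε ^ p * α) := hsum
    have hbad_le : bad.card ≤ s := by
      apply Nat.le_floor
      have h2 : (bad.card : ℝ) * ε ^ p ≤ ((n : ℝ) * α) * ε ^ p := by nlinarith [hbadcard]
      have := le_of_mul_le_mul_right h2 hεp
      linarith [this]
    have hsel : ∀ k : Fin n, ∃ i < G, |u k - gridPt K ε i| ≤ ε :=
      fun k => grid_approx hK0 hε (hU u hu k)
    choose idx hidx habs using hsel
    set f : Fin n → Fin (G + 1) := fun k =>
      if ε < |u k - c k| then (⟨idx k, Nat.lt_succ_of_lt (hidx k)⟩ : Fin (G + 1))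
      else Fin.last G with hf
    have hfT : f ∈ Tset n G s := by
      simp only [Tset, Finset.mem_filter, Fintype.mem_piFinset, Finset.mem_univ,
        implies_true, true_and]
      refine le_trans (Finset.card_le_card ?_) hbad_le
      intro k hk
      have hk' : f k ≠ Fin.last G := (Finset.mem_filter.mp hk).2
      simp only [Finset.mem_filter, Finset.mem_univ, true_and, hbad]
      by_contra hcon
      apply hk'
      simp [hf, hcon]
    refine ⟨Φ (c, f), Finset.mem_image_of_mem _ (Finset.mem_product.mpr ⟨hc, hfT⟩), ?_⟩
    apply dninf_le hε.le
    intro k hk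
    have hΦk : Φ (c, f) k = if ((f ⟨k, hk⟩ : ℕ) < G) then gridPt K ε (f ⟨k, hk⟩) else c k := by
      simp [hΦ, hk]
    by_cases hb : ε < |u k - c k|
    · have hfk : f ⟨k, hk⟩ = (⟨idx ⟨k, hk⟩, Nat.lt_succ_of_lt (hidx ⟨k, hk⟩)⟩ : Fin (G + 1)) := by
        simp only [hf]
        exact if_pos hb
      rw [hΦk, hfk]
      simp only [if_pos (hidx ⟨k, hk⟩)]
      exact habs ⟨k, hk⟩
    · have hfk : f ⟨k, hk⟩ = Fin.last G := by
        simp only [hf]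
        exact if_neg hb
      rw [hΦk, hfk]
      simp only [Fin.val_last, lt_irrefl, if_neg (lt_irrefl G)]
      exact le_of_not_gt hb
  · calc ((C ×ˢ Tset n G s).image Φ).card ≤ (C ×ˢ Tset n G s).card := Finset.card_image_le
      _ = C.card * (Tset n G s).card := Finset.card_product _ _

section Entropy

variable {K p : ℝ} {U : Set (ℕ → ℝ)}

/-- The covering number of a bounded set in `dninf` is at most `⌈K/ε⌉₊ ^ n`. -/
lemma covInf_le (hK : 0 < K) {ε : ℝ} (hε : 0 < ε)
    (hU : ∀ u ∈ U, ∀ k, u k ∈ Set.Icc (-K) K) (n : ℕ) :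
    coveringNumber ε (dninf n) U ≤ ((⌈K / ε⌉₊ : ℝ≥0∞)) ^ n := by
  obtain ⟨C, hcov, hcard⟩ := exists_dninf_cover hK hε hU n
  calc coveringNumber ε (dninf n) U ≤ (C.card : ℝ≥0∞) := coveringNumber_le_card hcov
    _ ≤ ((⌈K / ε⌉₊ ^ n : ℕ) : ℝ≥0∞) := by exact_mod_cast hcard
    _ = ((⌈K / ε⌉₊ : ℝ≥0∞)) ^ n := by push_cast; ring

lemma covP_le_covInf (hp : 1 ≤ p) {ε : ℝ} (n : ℕ) :
    coveringNumber ε (dnp p n) U ≤ coveringNumber ε (dninf n) U :=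
  coveringNumber_mono_d fun u v => dnp_le_dninf hp n u v

lemma covInf_ne_top (hK : 0 < K) {ε : ℝ} (hε : 0 < ε)
    (hU : ∀ u ∈ U, ∀ k, u k ∈ Set.Icc (-K) K) (n : ℕ) :
    coveringNumber ε (dninf n) U ≠ ⊤ :=
  ne_top_of_le_ne_top (by simp [ENNReal.pow_ne_top, ENNReal.natCast_ne_top])
    (covInf_le hK hε hU n)

lemma covP_ne_top (hK : 0 < K) (hp : 1 ≤ p) {ε : ℝ} (hε : 0 < ε)
    (hU : ∀ u ∈ U, ∀ k, u k ∈ Set.Icc (-K) K) (n : ℕ) :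
    coveringNumber ε (dnp p n) U ≠ ⊤ :=
  ne_top_of_le_ne_top (covInf_ne_top hK hε hU n) (covP_le_covInf hp n)

/-- Bounds for the normalized log covering numbers. -/
lemma aInf_bounds (hK : 0 < K) (hUne : U.Nonempty) {ε : ℝ} (hε : 0 < ε)
    (hU : ∀ u ∈ U, ∀ k, u k ∈ Set.Icc (-K) K) (n : ℕ) :
    0 ≤ Real.log (coveringNumber ε (dninf n) U).toReal / n ∧
      Real.log (coveringNumber ε (dninf n) U).toReal / n ≤ Real.log ⌈K / ε⌉₊ := by
  have hfin := covInf_ne_top hK hε hU n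
  have h1 : 1 ≤ (coveringNumber ε (dninf n) U).toReal := by
    rw [show (1:ℝ) = (1:ℝ≥0∞).toReal by simp]
    exact ENNReal.toReal_mono hfin (one_le_coveringNumber hUne)
  have hG1 : 1 ≤ ⌈K / ε⌉₊ := Nat.one_le_ceil_iff.mpr (by positivity)
  have hlogG : 0 ≤ Real.log ⌈K / ε⌉₊ := Real.log_nonneg (by exact_mod_cast hG1)
  have hub : (coveringNumber ε (dninf n) U).toReal ≤ (⌈K / ε⌉₊ : ℝ) ^ n := by
    have := ENNReal.toReal_mono (by simp [ENNReal.pow_ne_top, ENNReal.natCast_ne_top])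
      (covInf_le hK hε hU n)
    simpa using this
  have hlog : Real.log (coveringNumber ε (dninf n) U).toReal ≤ n * Real.log ⌈K / ε⌉₊ := by
    calc Real.log (coveringNumber ε (dninf n) U).toReal ≤ Real.log ((⌈K / ε⌉₊ : ℝ) ^ n) :=
        Real.log_le_log (by linarith) hub
      _ = n * Real.log ⌈K / ε⌉₊ := Real.log_pow _ _
  constructor
  · exact div_nonneg (Real.log_nonneg h1) (Nat.cast_nonneg n)
  · rcases Nat.eq_zero_or_pos n with hn | hn
    · simp [hn, hlogG]
    · rw [div_le_iff₀ (by exact_mod_cast hn)]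
      linarith [hlog]

lemma aP_bounds (hK : 0 < K) (hp : 1 ≤ p) (hUne : U.Nonempty) {ε : ℝ} (hε : 0 < ε)
    (hU : ∀ u ∈ U, ∀ k, u k ∈ Set.Icc (-K) K) (n : ℕ) :
    0 ≤ Real.log (coveringNumber ε (dnp p n) U).toReal / n ∧
      Real.log (coveringNumber ε (dnp p n) U).toReal / n ≤ Real.log ⌈K / ε⌉₊ := by
  have hfinI := covInf_ne_top hK hε hU n
  have hfin := covP_ne_top hK hp hε hU n
  have h1 : 1 ≤ (coveringNumber ε (dnp p n) U).toReal := by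
    rw [show (1:ℝ) = (1:ℝ≥0∞).toReal by simp]
    exact ENNReal.toReal_mono hfin (one_le_coveringNumber hUne)
  have hG1 : 1 ≤ ⌈K / ε⌉₊ := Nat.one_le_ceil_iff.mpr (by positivity)
  have hlogG : 0 ≤ Real.log ⌈K / ε⌉₊ := Real.log_nonneg (by exact_mod_cast hG1)
  have hub : (coveringNumber ε (dnp p n) U).toReal ≤ (⌈K / ε⌉₊ : ℝ) ^ n := by
    have := ENNReal.toReal_mono (by simp [ENNReal.pow_ne_top, ENNReal.natCast_ne_top])
      ((covP_le_covInf hp n).trans (covInf_le hK hε hU n))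
    simpa using this
  have hlog : Real.log (coveringNumber ε (dnp p n) U).toReal ≤ n * Real.log ⌈K / ε⌉₊ := by
    calc Real.log (coveringNumber ε (dnp p n) U).toReal ≤ Real.log ((⌈K / ε⌉₊ : ℝ) ^ n) :=
        Real.log_le_log (by linarith) hub
      _ = n * Real.log ⌈K / ε⌉₊ := Real.log_pow _ _
  constructor
  · exact div_nonneg (Real.log_nonneg h1) (Nat.cast_nonneg n)
  · rcases Nat.eq_zero_or_pos n with hn | hn
    · simp [hn, hlogG]
    · rw [div_le_iff₀ (by exact_mod_cast hn)]
      linarith [hlog]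

/-- Easy direction at each scale. -/
lemma entropy_p_le_inf (hK : 0 < K) (hp : 1 ≤ p) (hUne : U.Nonempty) {r : ℝ} (hr : 0 < r)
    (hU : ∀ u ∈ U, ∀ k, u k ∈ Set.Icc (-K) K) :
    entropyAtScale U (fun n => dnp p n) r ≤ entropyAtScale U (fun n => dninf n) r := by
  apply limsup_le_limsup
  · apply Eventually.of_forall
    intro n
    have hfinI := covInf_ne_top hK hr hU n
    have h1p : 1 ≤ (coveringNumber r (dnp p n) U).toReal := by
      rw [show (1:ℝ) = (1:ℝ≥0∞).toReal by simp]
      exact ENNReal.toReal_mono (covP_ne_top hK hp hr hU n) (one_le_coveringNumber hUne)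
    have hmono : (coveringNumber r (dnp p n) U).toReal ≤
        (coveringNumber r (dninf n) U).toReal :=
      ENNReal.toReal_mono hfinI (covP_le_covInf hp n)
    rcases Nat.eq_zero_or_pos n with hn | hn
    · simp [hn]
    · have hn' : (0:ℝ) < n := by exact_mod_cast hn
      rw [div_le_div_iff_of_pos_right hn']
      exact Real.log_le_log (by linarith) hmono
  · exact isCoboundedUnder_le_of_le atTop fun n => (aP_bounds hK hp hUne hr hU n).1
  · exact isBoundedUnder_of ⟨Real.log ⌈K / r⌉₊, fun n => (aInf_bounds hK hUne hr hU n).2⟩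

end Entropy

lemma entropy_inf_le_p {K p : ℝ} {U : Set (ℕ → ℝ)} (hK : 1 ≤ K) (hp : 1 ≤ p)
    (hUne : U.Nonempty) (hU : ∀ u ∈ U, ∀ k, u k ∈ Set.Icc (-K) K)
    {ε η : ℝ} (hε : 0 < ε) (hη : 0 < η) :
    ∃ δ > 0, entropyAtScale U (fun n => dninf n) ε ≤
      entropyAtScale U (fun n => dnp p n) δ + η := by
  have hK0 : 0 < K := lt_of_lt_of_le one_pos hK
  have hp0 : 0 < p := lt_of_lt_of_le one_pos hp
  set G : ℕ := ⌈K / ε⌉₊ with hGdef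
  have hG1 : 1 ≤ G := Nat.one_le_ceil_iff.mpr (by positivity)
  have hG0 : (0:ℝ) < G := by exact_mod_cast hG1
  set t : ℝ := min 1 (η / (2 * G)) with htdef
  have ht0 : 0 < t := lt_min one_pos (by positivity)
  have ht1 : t ≤ 1 := min_le_left _ _
  set L : ℝ := Real.log t⁻¹ with hLdef
  have hL0 : 0 ≤ L := by
    rw [hLdef, Real.log_inv]
    linarith [Real.log_nonpos ht0.le ht1]
  set α : ℝ := min 1 (η / (2 * (L + 1))) with hαdef
  have hα0 : 0 < α := lt_min one_pos (by positivity)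
  set δ : ℝ := ε * α ^ (1 / p) with hδdef
  have hα1p : 0 < α ^ (1 / p) := Real.rpow_pos_of_pos hα0 _
  have hδ0 : 0 < δ := by positivity
  refine ⟨δ, hδ0, ?_⟩
  have hc1 : Real.log (1 + G * t) ≤ η / 2 := by
    have h1 : Real.log (1 + G * t) ≤ (1 + G * t) - 1 :=
      Real.log_le_sub_one_of_pos (by positivity)
    have h2 : (G:ℝ) * t ≤ η / 2 := by
      have ht : t ≤ η / (2 * G) := min_le_right _ _
      calc (G:ℝ) * t ≤ G * (η / (2 * G)) := mul_le_mul_of_nonneg_left ht hG0.le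
        _ = η / 2 := by field_simp
    linarith
  have hc2 : α * L ≤ η / 2 := by
    have hαle : α ≤ η / (2 * (L + 1)) := min_le_right _ _
    have h1 : α * L ≤ η / (2 * (L + 1)) * L := mul_le_mul_of_nonneg_right hαle hL0
    have h3 : η / (2 * (L + 1)) * L ≤ η / 2 := by
      rw [div_mul_eq_mul_div, div_le_div_iff₀ (by positivity) (by norm_num)]
      nlinarith [hη.le, hL0]
    linarith
  have hpt : ∀ n : ℕ, Real.log (coveringNumber ε (dninf n) U).toReal / n ≤
      Real.log (coveringNumber δ (dnp p n) U).toReal / n + η := by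
    intro n
    rcases Nat.eq_zero_or_pos n with hn | hn
    · simp [hn]; linarith
    have hn' : (0:ℝ) < n := by exact_mod_cast hn
    obtain ⟨C0, hC0cov, -⟩ := exists_dninf_cover hK0 hδ0 hU n
    have hne : ∃ C : Finset (ℕ → ℝ), ∀ u ∈ U, ∃ c ∈ C, dnp p n u c ≤ δ := by
      refine ⟨C0, fun u hu => ?_⟩
      obtain ⟨c, hc, hd⟩ := hC0cov u hu
      exact ⟨c, hc, (dnp_le_dninf hp n u c).trans hd⟩
    obtain ⟨C, hCcov, hCeq⟩ := exists_cover_eq hne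
    obtain ⟨C', hC'cov, hC'card⟩ := refine_cover hK hp hε hα0 hU hCcov
    set Tc : ℕ := (Tset n G ⌊α * n⌋₊).card with hTcdef
    have hTc1 : 1 ≤ Tc := Finset.card_pos.mpr ⟨_, Tset_nonempty n G ⌊α * n⌋₊⟩
    have hcovle : coveringNumber ε (dninf n) U ≤ ((C.card * Tc : ℕ) : ℝ≥0∞) :=
      (coveringNumber_le_card hC'cov).trans (by exact_mod_cast hC'card)
    have hNIle : (coveringNumber ε (dninf n) U).toReal ≤ ((C.card * Tc : ℕ) : ℝ) := by
      have := ENNReal.toReal_mono (ENNReal.natCast_ne_top _) hcovle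
      simpa using this
    have hm1 : 1 ≤ C.card := by
      have h := one_le_coveringNumber (δ := δ) (d := dnp p n) hUne
      rw [← hCeq] at h
      exact_mod_cast h
    have hNI1 : 1 ≤ (coveringNumber ε (dninf n) U).toReal := by
      rw [show (1:ℝ) = (1:ℝ≥0∞).toReal by simp]
      exact ENNReal.toReal_mono (covInf_ne_top hK0 hε hU n) (one_le_coveringNumber hUne)
    have hlogm : Real.log (coveringNumber δ (dnp p n) U).toReal = Real.log C.card := by
      rw [← hCeq]; simp
    have hTle : (Tc : ℝ) ≤ t⁻¹ ^ ⌊α * n⌋₊ * (1 + G * t) ^ n := Tset_card_le ht0 ht1 n G _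
    have hlogT : Real.log Tc ≤ (⌊α * n⌋₊ : ℝ) * L + n * Real.log (1 + G * t) := by
      calc Real.log Tc ≤ Real.log (t⁻¹ ^ ⌊α * n⌋₊ * (1 + G * t) ^ n) :=
            Real.log_le_log (by exact_mod_cast hTc1) hTle
        _ = (⌊α * n⌋₊ : ℝ) * L + n * Real.log (1 + G * t) := by
            rw [Real.log_mul (by positivity) (by positivity), Real.log_pow, Real.log_pow]
    have hfloor : (⌊α * n⌋₊ : ℝ) ≤ α * n := Nat.floor_le (by positivity)
    have hlogT2 : Real.log Tc ≤ n * η := by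
      have h4 : (⌊α * n⌋₊ : ℝ) * L ≤ (α * n) * L := mul_le_mul_of_nonneg_right hfloor hL0
      have h5 : (n:ℝ) * Real.log (1 + G * t) ≤ n * (η / 2) :=
        mul_le_mul_of_nonneg_left hc1 hn'.le
      have h6 : (α * n) * L = n * (α * L) := by ring
      have h7 : (n:ℝ) * (α * L) ≤ n * (η / 2) := mul_le_mul_of_nonneg_left hc2 hn'.le
      calc Real.log Tc ≤ (α * n) * L + n * (η / 2) := by linarith
        _ ≤ n * (η / 2) + n * (η / 2) := by rw [h6]; linarith
        _ = n * η := by ring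
    have hlogNI : Real.log (coveringNumber ε (dninf n) U).toReal ≤
        Real.log C.card + Real.log Tc := by
      calc Real.log (coveringNumber ε (dninf n) U).toReal
          ≤ Real.log ((C.card * Tc : ℕ) : ℝ) := Real.log_le_log (by linarith) hNIle
        _ = Real.log C.card + Real.log Tc := by
            push_cast
            rw [Real.log_mul (by exact_mod_cast Nat.one_le_iff_ne_zero.mp hm1)
              (by exact_mod_cast Nat.one_le_iff_ne_zero.mp hTc1)]
    rw [hlogm]
    have hmain : Real.log (coveringNumber ε (dninf n) U).toReal ≤
        Real.log C.card + n * η := by linarith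
    calc Real.log (coveringNumber ε (dninf n) U).toReal / n
        ≤ (Real.log C.card + n * η) / n := (div_le_div_iff_of_pos_right hn').mpr hmain
      _ = Real.log C.card / n + η := by field_simp
  have hboundP := fun n => aP_bounds hK0 hp hUne hδ0 hU n
  calc entropyAtScale U (fun n => dninf n) ε
      ≤ limsup (fun n : ℕ => Real.log (coveringNumber δ (dnp p n) U).toReal / n + η) atTop := by
        refine limsup_le_limsup (Eventually.of_forall hpt) ?_ ?_
        · exact isCoboundedUnder_le_of_le atTop fun n => (aInf_bounds hK0 hUne hε hU n).1
        · exact isBoundedUnder_of ⟨Real.log ⌈K / δ⌉₊ + η, fun n => by linarith [(hboundP n).2]⟩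
    _ = entropyAtScale U (fun n => dnp p n) δ + η := by
        refine limsup_add_const atTop _ η ?_ ?_
        · exact isBoundedUnder_of ⟨Real.log ⌈K / δ⌉₊, fun n => (hboundP n).2⟩
        · exact isCoboundedUnder_le_of_le atTop fun n => (hboundP n).1

theorem lp_entropies_all_equal
    (K : ℝ) (hK : 1 ≤ K) (U : Set (ℕ → ℝ)) (hU : ∀ u ∈ U, ∀ k, u k ∈ Set.Icc (-K) K)
    (p : ℝ) (hp : 1 ≤ p) :
    seqEntropy U (fun n => dnp p n) = seqEntropy U (fun n => dninf n) := by
  have hK0 : 0 < K := lt_of_lt_of_le one_pos hK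
  by_cases hUne : U.Nonempty
  · set A : Set ℝ := {a : ℝ | ∃ r > 0, a = entropyAtScale U (fun n => dnp p n) r} with hA
    set B : Set ℝ := {a : ℝ | ∃ r > 0, a = entropyAtScale U (fun n => dninf n) r} with hB
    have hAne : A.Nonempty := ⟨_, 1, one_pos, rfl⟩
    have hBne : B.Nonempty := ⟨_, 1, one_pos, rfl⟩
    show sSup A = sSup B
    by_cases hBbd : BddAbove B
    · have hAbd : BddAbove A := by
        obtain ⟨M, hM⟩ := hBbd
        refine ⟨M, ?_⟩
        rintro a ⟨r, hr, rfl⟩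
        exact (entropy_p_le_inf hK0 hp hUne hr hU).trans (hM ⟨r, hr, rfl⟩)
      apply le_antisymm
      · apply csSup_le hAne
        rintro a ⟨r, hr, rfl⟩
        exact (entropy_p_le_inf hK0 hp hUne hr hU).trans (le_csSup hBbd ⟨r, hr, rfl⟩)
      · apply csSup_le hBne
        rintro b ⟨ε, hε, rfl⟩
        apply le_of_forall_pos_le_add
        intro η hη
        obtain ⟨δ, hδ, hle⟩ := entropy_inf_le_p hK hp hUne hU hε hη
        exact hle.trans (add_le_add_left (le_csSup hAbd ⟨δ, hδ, rfl⟩) η)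
    · have hAbd : ¬ BddAbove A := by
        intro hAbd
        apply hBbd
        obtain ⟨M, hM⟩ := hAbd
        refine ⟨M + 1, ?_⟩
        rintro b ⟨ε, hε, rfl⟩
        obtain ⟨δ, hδ, hle⟩ := entropy_inf_le_p hK hp hUne hU hε one_pos
        exact hle.trans (add_le_add_left (hM ⟨δ, hδ, rfl⟩) 1)
      rw [Real.sSup_of_not_bddAbove hAbd, Real.sSup_of_not_bddAbove hBbd]
  · rw [Set.not_nonempty_iff_eq_empty] at hUne
    subst hUne
    have hcov0 : ∀ (r : ℝ) (d : (ℕ → ℝ) → (ℕ → ℝ) → ℝ),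
        coveringNumber r d (∅ : Set (ℕ → ℝ)) = 0 := by
      intro r d
      refine le_antisymm ?_ zero_le
      exact sInf_le ⟨∅, by simp, by simp⟩
    have hent : ∀ (d : ℕ → (ℕ → ℝ) → (ℕ → ℝ) → ℝ) (r : ℝ),
        entropyAtScale (∅ : Set (ℕ → ℝ)) d r = 0 := by
      intro d r
      have : (fun n : ℕ => Real.log (coveringNumber r (d n) (∅ : Set (ℕ → ℝ))).toReal / n)
          = fun _ : ℕ => (0:ℝ) := by
        funext n
        rw [hcov0]
        simp
      rw [entropyAtScale, this, limsup_const]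
    rw [seqEntropy, seqEntropy]
    congr 1
    ext a
    simp only [Set.mem_setOf_eq, hent]
end

section
/- Let U, V, W be finite-valued stationary processes with h(U) = 0, V ergodic, W i.i.d., and suppose (U,V,W) is jointly stationary with V independent of W. Then the pair process (U,V) is independent of W. -/
open MeasureTheory ProbabilityTheory

/-- Shannon entropy of the `n`-block distribution of a finite-valued process. -/
noncomputable def blockEntropy {Ω A : Type*} [MeasurableSpace Ω] [Fintype A]
    (μ : Measure Ω) (U : ℕ → Ω → A) (n : ℕ) : ℝ :=
  ∑ a : Fin n → A, Real.negMulLog (μ {ω | ∀ k : Fin n, U (k : ℕ) ω = a k}).toReal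

/-- Kolmogorov–Sinai (per-coordinate) entropy of a finite-valued stationary process:
by subadditivity, the limit of `H_n / n` equals the infimum. -/
noncomputable def procEntropy {Ω A : Type*} [MeasurableSpace Ω] [Fintype A]
    (μ : Measure Ω) (U : ℕ → Ω → A) : ℝ :=
  ⨅ n : {n : ℕ // 0 < n}, blockEntropy μ U n.1 / n.1

set_option linter.unusedSectionVars false
set_option maxHeartbeats 1000000

namespace PPIN


variable {I : Type*} [Fintype I]

lemma gibbs_pointwise {p q : ℝ} (hp : 0 ≤ p) (hq : 0 ≤ q) (hsupp : q = 0 → p = 0) :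
    p * Real.log q - p * Real.log p ≤ q - p := by
  rcases eq_or_lt_of_le hp with h | hp0
  · rw [← h]; simpa using hq
  · have hq0 : 0 < q := by
      rcases eq_or_lt_of_le hq with h' | h'
      · exact absurd (hsupp h'.symm) (ne_of_gt hp0)
      · exact h'
    have h1 : Real.log (q / p) ≤ q / p - 1 := Real.log_le_sub_one_of_pos (by positivity)
    have h2 : Real.log (q / p) = Real.log q - Real.log p :=
      Real.log_div (ne_of_gt hq0) (ne_of_gt hp0)
    have h3 : p * Real.log (q / p) ≤ p * (q / p - 1) := by nlinarith
    have h4 : p * (q / p - 1) = q - p := by field_simp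
    calc p * Real.log q - p * Real.log p = p * Real.log (q / p) := by rw [h2]; ring
    _ ≤ p * (q / p - 1) := h3
    _ = q - p := h4

lemma gibbs_pointwise_strict {p q : ℝ} (hp : 0 < p) (hq : 0 < q) (hne : p ≠ q) :
    p * Real.log q - p * Real.log p < q - p := by
  have h1 : Real.log (q / p) < q / p - 1 :=
    Real.log_lt_sub_one_of_pos (by positivity) (by
      intro h
      exact hne (by field_simp at h; linarith))
  have h2 : Real.log (q / p) = Real.log q - Real.log p :=
    Real.log_div (ne_of_gt hq) (ne_of_gt hp)
  have h3 : p * Real.log (q / p) < p * (q / p - 1) := by nlinarith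
  have h4 : p * (q / p - 1) = q - p := by field_simp
  calc p * Real.log q - p * Real.log p = p * Real.log (q / p) := by rw [h2]; ring
  _ < p * (q / p - 1) := h3
  _ = q - p := h4

lemma gibbs {p q : I → ℝ} (hp : ∀ i, 0 ≤ p i) (hq : ∀ i, 0 ≤ q i)
    (hps : ∑ i, p i = 1) (hqs : ∑ i, q i ≤ 1) (hsupp : ∀ i, q i = 0 → p i = 0) :
    ∑ i, Real.negMulLog (p i) ≤ -∑ i, p i * Real.log (q i) ∧
    ((∑ i, Real.negMulLog (p i) = -∑ i, p i * Real.log (q i)) → ∀ i, p i = q i) := by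
  have key : ∀ i, p i * Real.log (q i) - p i * Real.log (p i) ≤ q i - p i :=
    fun i => gibbs_pointwise (hp i) (hq i) (hsupp i)
  have hsum : ∑ i, (p i * Real.log (q i) - p i * Real.log (p i)) ≤ ∑ i, (q i - p i) :=
    Finset.sum_le_sum fun i _ => key i
  have e1 : ∑ i, Real.negMulLog (p i) = -∑ i, p i * Real.log (p i) := by
    simp [Real.negMulLog, neg_mul]
  have e2 : ∑ i, (p i * Real.log (q i) - p i * Real.log (p i)) =
      ∑ i, p i * Real.log (q i) - ∑ i, p i * Real.log (p i) := Finset.sum_sub_distrib _ _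
  have e3 : ∑ i, (q i - p i) = ∑ i, q i - 1 := by rw [Finset.sum_sub_distrib, hps]
  constructor
  · rw [e1]; rw [e2, e3] at hsum; linarith
  · intro heq
    rw [e1] at heq
    have h0 : ∑ i, (p i * Real.log (q i) - p i * Real.log (p i)) = 0 := by
      rw [e2]; linarith
    have h1 : ∑ i, ((q i - p i) - (p i * Real.log (q i) - p i * Real.log (p i))) = 0 := by
      rw [Finset.sum_sub_distrib, h0, e3]
      have hge : (0:ℝ) ≤ ∑ i, (q i - p i) := le_trans (le_of_eq h0.symm) hsum
      rw [e3] at hge; linarith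
    have h2 : ∀ i ∈ Finset.univ, (q i - p i) - (p i * Real.log (q i) - p i * Real.log (p i)) = 0 := by
      rw [Finset.sum_eq_zero_iff_of_nonneg (fun i _ => by linarith [key i])] at h1
      exact h1
    intro i
    have h3 := h2 i (Finset.mem_univ i)
    rcases eq_or_lt_of_le (hp i) with h4 | h4
    · -- p i = 0, then q i = 0
      rw [← h4] at h3 ⊢
      simp at h3; linarith
    · by_contra hne
      have hq0 : 0 < q i := by
        rcases eq_or_lt_of_le (hq i) with h' | h'
        · exact absurd (hsupp i h'.symm) (ne_of_gt h4)
        · exact h'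
      exact absurd h3 (ne_of_gt (by linarith [gibbs_pointwise_strict h4 hq0 hne]))

lemma negMulLog_sum {f : I → ℝ} (hf : ∀ i, 0 ≤ f i) :
    Real.negMulLog (∑ i, f i) ≤ ∑ i, Real.negMulLog (f i) := by
  have h : Real.negMulLog (∑ i, f i) = ∑ i, -(f i * Real.log (∑ j, f j)) := by
    rw [Real.negMulLog]
    rw [show ∑ i, -(f i * Real.log (∑ j, f j)) = -((∑ i, f i) * Real.log (∑ j, f j)) by
      rw [Finset.sum_neg_distrib, ← Finset.sum_mul]]
    ring
  rw [h]
  apply Finset.sum_le_sum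
  intro i _
  rcases eq_or_lt_of_le (hf i) with h0 | h0
  · rw [← h0]; simp [Real.negMulLog]
  · have hs : f i ≤ ∑ j, f j := Finset.single_le_sum (fun j _ => hf j) (Finset.mem_univ i)
    have hlog : Real.log (f i) ≤ Real.log (∑ j, f j) := Real.log_le_log h0 hs
    simp only [Real.negMulLog, neg_mul]
    nlinarith

section Ent

variable {Ω : Type*} [MeasurableSpace Ω] (μ : Measure Ω) [IsProbabilityMeasure μ]
variable {S T R : Type*} [Fintype S] [Fintype T] [Fintype R]

/-- all singleton preimages are measurable -/
def MS (X : Ω → S) : Prop := ∀ s : S, MeasurableSet (X ⁻¹' {s})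

variable {μ}

lemma MS.of_measurable [MeasurableSpace S] [MeasurableSingletonClass S] {X : Ω → S}
    (hX : Measurable X) : MS X := fun s => hX (measurableSet_singleton s)

noncomputable def pd (μ : Measure Ω) (X : Ω → S) (s : S) : ℝ := (μ (X ⁻¹' {s})).toReal

noncomputable def ent (μ : Measure Ω) (X : Ω → S) : ℝ := ∑ s, Real.negMulLog (pd μ X s)

lemma pd_nonneg (X : Ω → S) (s : S) : 0 ≤ pd μ X s := ENNReal.toReal_nonneg

variable [DecidableEq S] [DecidableEq T] [DecidableEq R]

lemma pd_comp {X : Ω → S} (hX : MS X) {S' : Type*} [DecidableEq S'] (g : S → S') (u : S') :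
    pd μ (fun ω => g (X ω)) u = ∑ s ∈ Finset.univ.filter (fun s => g s = u), pd μ X s := by
  classical
  have h1 : ∀ s ∈ Finset.univ.filter (fun s => g s = u), MeasurableSet (X ⁻¹' {s}) :=
    fun s _ => hX s
  have h2 := sum_measure_preimage_singleton (μ := μ) (Finset.univ.filter (fun s => g s = u)) h1
  have h3 : X ⁻¹' ↑(Finset.univ.filter (fun s => g s = u)) = (fun ω => g (X ω)) ⁻¹' {u} := by
    ext ω; simp
  rw [h3] at h2
  have h4 : ∀ s ∈ Finset.univ.filter (fun s => g s = u), μ (X ⁻¹' {s}) ≠ ⊤ :=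
    fun s _ => measure_ne_top μ _
  calc pd μ (fun ω => g (X ω)) u = (∑ s ∈ Finset.univ.filter (fun s => g s = u), μ (X ⁻¹' {s})).toReal := by
        rw [h2]; rfl
  _ = ∑ s ∈ Finset.univ.filter (fun s => g s = u), pd μ X s := ENNReal.toReal_sum h4

lemma MS.comp {X : Ω → S} (hX : MS X) {S' : Type*} (g : S → S') : MS (fun ω => g (X ω)) := by
  classical
  intro u
  have h3 : (fun ω => g (X ω)) ⁻¹' {u} = ⋃ s ∈ Finset.univ.filter (fun s => g s = u), X ⁻¹' {s} := by
    ext ω; simp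
  rw [h3]
  exact (Finset.univ.filter (fun s => g s = u)).measurableSet_biUnion (fun s _ => hX s)

lemma sum_pd {X : Ω → S} (hX : MS X) : ∑ s, pd μ X s = 1 := by
  classical
  have h := pd_comp (μ := μ) hX (fun _ => (0 : Fin 1)) 0
  have h2 : pd μ (fun _ => (0 : Fin 1)) 0 = 1 := by
    have : ((fun (_ : Ω) => (0 : Fin 1)) ⁻¹' {0}) = Set.univ := by ext ω; simp
    rw [pd, this]
    simp
  rw [h2] at h
  have h3 : Finset.univ.filter (fun (s : S) => (0 : Fin 1) = (0:Fin 1)) = Finset.univ := by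
    simp
  rw [h3] at h
  exact h.symm


end Ent

lemma negMulLog_sum_finset {α : Type*} (s : Finset α) (f : α → ℝ) (hf : ∀ i ∈ s, 0 ≤ f i) :
    Real.negMulLog (∑ i ∈ s, f i) ≤ ∑ i ∈ s, Real.negMulLog (f i) := by
  have h : Real.negMulLog (∑ i ∈ s, f i) = ∑ i ∈ s, -(f i * Real.log (∑ j ∈ s, f j)) := by
    rw [Real.negMulLog]
    rw [show ∑ i ∈ s, -(f i * Real.log (∑ j ∈ s, f j)) = -((∑ i ∈ s, f i) * Real.log (∑ j ∈ s, f j)) by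
      rw [Finset.sum_neg_distrib, ← Finset.sum_mul]]
    ring
  rw [h]
  apply Finset.sum_le_sum
  intro i hi
  rcases eq_or_lt_of_le (hf i hi) with h0 | h0
  · rw [← h0]; simp [Real.negMulLog]
  · have hs : f i ≤ ∑ j ∈ s, f j := Finset.single_le_sum hf hi
    have hlog : Real.log (f i) ≤ Real.log (∑ j ∈ s, f j) := Real.log_le_log h0 hs
    simp only [Real.negMulLog, neg_mul]
    nlinarith

section Ent2

variable {Ω : Type*} [MeasurableSpace Ω] {μ : Measure Ω} [IsProbabilityMeasure μ]
variable {S T R : Type*} [Fintype S] [Fintype T] [Fintype R]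

lemma ent_eq_neg_sum (X : Ω → S) :
    ent μ X = -∑ s, pd μ X s * Real.log (pd μ X s) := by
  simp [ent, Real.negMulLog, neg_mul]

lemma pd_eq_sum_preimage {X : Ω → S} (hX : MS X) (F : Finset S) :
    (μ (X ⁻¹' ↑F)).toReal = ∑ s ∈ F, pd μ X s := by
  rw [← sum_measure_preimage_singleton F (fun s _ => hX s)]
  exact ENNReal.toReal_sum (fun s _ => measure_ne_top μ _)

lemma pd_fst {X : Ω → S} {Y : Ω → T} (hXY : MS (fun ω => (X ω, Y ω))) (s : S) :
    pd μ X s = ∑ t, pd μ (fun ω => (X ω, Y ω)) (s, t) := by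
  classical
  have hset : X ⁻¹' {s} = (fun ω => (X ω, Y ω)) ⁻¹' ↑(({s} : Finset S) ×ˢ (Finset.univ : Finset T)) := by
    ext ω; simp [eq_comm]
  rw [pd, hset, pd_eq_sum_preimage hXY, Finset.sum_product, Finset.sum_singleton]

lemma pd_snd {X : Ω → S} {Y : Ω → T} (hXY : MS (fun ω => (X ω, Y ω))) (t : T) :
    pd μ Y t = ∑ s, pd μ (fun ω => (X ω, Y ω)) (s, t) := by
  classical
  have hset : Y ⁻¹' {t} = (fun ω => (X ω, Y ω)) ⁻¹' ↑((Finset.univ : Finset S) ×ˢ ({t} : Finset T)) := by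
    ext ω; simp [eq_comm]
  rw [pd, hset, pd_eq_sum_preimage hXY, Finset.sum_product_right, Finset.sum_singleton]

lemma ent_comp_le {X : Ω → S} (hX : MS X) {S' : Type*} [Fintype S'] (g : S → S') :
    ent μ (fun ω => g (X ω)) ≤ ent μ X := by
  classical
  unfold ent
  have e : ∀ u : S', Real.negMulLog (pd μ (fun ω => g (X ω)) u)
      ≤ ∑ s ∈ Finset.univ.filter (fun s => g s = u), Real.negMulLog (pd μ X s) := by
    intro u
    rw [pd_comp hX g u]
    exact negMulLog_sum_finset _ _ (fun i _ => pd_nonneg _ _)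
  calc ∑ u : S', Real.negMulLog (pd μ (fun ω => g (X ω)) u)
      ≤ ∑ u : S', ∑ s ∈ Finset.univ.filter (fun s => g s = u), Real.negMulLog (pd μ X s) :=
        Finset.sum_le_sum fun u _ => e u
  _ = ∑ s, Real.negMulLog (pd μ X s) := Finset.sum_fiberwise _ _ _

lemma ent_comp_inj {X : Ω → S} (hX : MS X) {S' : Type*} [Fintype S'] {g : S → S'}
    (hg : Function.Injective g) :
    ent μ (fun ω => g (X ω)) = ent μ X := by
  classical
  unfold ent
  rw [← Finset.sum_subset (Finset.subset_univ (Finset.univ.image g))]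
  · rw [Finset.sum_image (fun a _ b _ h => hg h)]
    refine Finset.sum_congr rfl fun s _ => ?_
    rw [pd_comp hX g (g s)]
    rw [show Finset.univ.filter (fun s' => g s' = g s) = {s} by
      ext s'; simp [hg.eq_iff]]
    rw [Finset.sum_singleton]
  · intro u _ hu
    rw [pd_comp hX g u]
    rw [show Finset.univ.filter (fun s' => g s' = u) = ∅ by
      ext s'
      simp only [Finset.mem_filter, Finset.mem_univ, true_and, Finset.notMem_empty, iff_false]
      intro h
      exact hu (by rw [← h]; exact Finset.mem_image_of_mem g (Finset.mem_univ s'))]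
    simp [Real.negMulLog]

lemma ent_unique [Unique S] (X : Ω → S) : ent μ X = 0 := by
  have huniv : X ⁻¹' {(default : S)} = Set.univ := by
    ext ω; simp [Unique.eq_default (X ω)]
  rw [ent, Fintype.sum_unique, pd, huniv]
  simp

lemma ent_pair_le_and_eq {X : Ω → S} {Y : Ω → T} (hX : MS X) (hY : MS Y)
    (hXY : MS (fun ω => (X ω, Y ω))) :
    ent μ (fun ω => (X ω, Y ω)) ≤ ent μ X + ent μ Y ∧
      (ent μ (fun ω => (X ω, Y ω)) = ent μ X + ent μ Y →
        ∀ s t, pd μ (fun ω => (X ω, Y ω)) (s, t) = pd μ X s * pd μ Y t) := by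
  classical
  set p : S × T → ℝ := pd μ (fun ω => (X ω, Y ω)) with hp
  set q : S × T → ℝ := fun x => pd μ X x.1 * pd μ Y x.2 with hq
  have hqsum : ∑ x : S × T, q x = 1 := by
    calc ∑ x : S × T, q x = ∑ s, ∑ t, pd μ X s * pd μ Y t := by
          rw [hq, Fintype.sum_prod_type]
    _ = ∑ s, pd μ X s * ∑ t, pd μ Y t := by
          refine Finset.sum_congr rfl fun s _ => ?_; rw [Finset.mul_sum]
    _ = (∑ s, pd μ X s) * (∑ t, pd μ Y t) := by rw [Finset.sum_mul]
    _ = 1 := by rw [sum_pd hX, sum_pd hY, one_mul]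
  have hmargX : ∀ s t, p (s, t) ≤ pd μ X s := by
    intro s t
    rw [pd_fst hXY s]
    exact Finset.single_le_sum (f := fun t' => pd μ (fun ω => (X ω, Y ω)) (s, t'))
      (fun t' _ => pd_nonneg _ _) (Finset.mem_univ t)
  have hmargY : ∀ s t, p (s, t) ≤ pd μ Y t := by
    intro s t
    rw [pd_snd hXY t]
    exact Finset.single_le_sum (f := fun s' => pd μ (fun ω => (X ω, Y ω)) (s', t))
      (fun s' _ => pd_nonneg _ _) (Finset.mem_univ s)
  have hsupp : ∀ x : S × T, q x = 0 → p x = 0 := by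
    rintro ⟨s, t⟩ h0
    rcases mul_eq_zero.mp h0 with h' | h'
    · exact le_antisymm (by rw [← h']; exact hmargX s t) (pd_nonneg _ _)
    · exact le_antisymm (by rw [← h']; exact hmargY s t) (pd_nonneg _ _)
  have hg := gibbs (p := p) (q := q) (fun x => pd_nonneg _ _)
    (fun x => mul_nonneg (pd_nonneg _ _) (pd_nonneg _ _)) (sum_pd hXY) (le_of_eq hqsum) hsupp
  have hRHS : -∑ x : S × T, p x * Real.log (q x) = ent μ X + ent μ Y := by
    have point : ∀ x : S × T, p x * Real.log (q x)
        = p x * Real.log (pd μ X x.1) + p x * Real.log (pd μ Y x.2) := by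
      intro x
      by_cases hpx : p x = 0
      · simp [hpx]
      · have hq0 : q x ≠ 0 := fun h => hpx (hsupp x h)
        have h1 : pd μ X x.1 ≠ 0 := fun h => hq0 (by rw [hq]; simp [h])
        have h2 : pd μ Y x.2 ≠ 0 := fun h => hq0 (by rw [hq]; simp [h])
        rw [hq]; simp only; rw [Real.log_mul h1 h2]; ring
    rw [Finset.sum_congr rfl fun x _ => point x, Finset.sum_add_distrib]
    have e1 : ∑ x : S × T, p x * Real.log (pd μ X x.1)
        = ∑ s, pd μ X s * Real.log (pd μ X s) := by
      rw [Fintype.sum_prod_type]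
      refine Finset.sum_congr rfl fun s _ => ?_
      have hr : ∀ y : T, p (s, y) * Real.log (pd μ X (s, y).1)
          = p (s, y) * Real.log (pd μ X s) := fun y => rfl
      rw [Finset.sum_congr rfl fun y _ => hr y, ← Finset.sum_mul, ← pd_fst hXY s]
    have e2 : ∑ x : S × T, p x * Real.log (pd μ Y x.2)
        = ∑ t, pd μ Y t * Real.log (pd μ Y t) := by
      rw [Fintype.sum_prod_type_right]
      refine Finset.sum_congr rfl fun t _ => ?_
      have hr : ∀ y : S, p (y, t) * Real.log (pd μ Y (y, t).2)
          = p (y, t) * Real.log (pd μ Y t) := fun y => rfl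
      rw [Finset.sum_congr rfl fun y _ => hr y, ← Finset.sum_mul, ← pd_snd hXY t]
    rw [e1, e2, ent_eq_neg_sum X, ent_eq_neg_sum Y]
    ring
  have hL : ent μ (fun ω => (X ω, Y ω)) = ∑ x : S × T, Real.negMulLog (p x) := rfl
  constructor
  · rw [hL, ← hRHS]; exact hg.1
  · intro heq s t
    exact hg.2 (by rw [← hL, heq, ← hRHS]) (s, t)

lemma ent_pair_le {X : Ω → S} {Y : Ω → T} (hX : MS X) (hY : MS Y)
    (hXY : MS (fun ω => (X ω, Y ω))) :
    ent μ (fun ω => (X ω, Y ω)) ≤ ent μ X + ent μ Y :=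
  (ent_pair_le_and_eq hX hY hXY).1

end Ent2

section Ent3

variable {Ω : Type*} [MeasurableSpace Ω] {μ : Measure Ω} [IsProbabilityMeasure μ]
variable {S T R : Type*} [Fintype S] [Fintype T] [Fintype R]

lemma pd_12 {X : Ω → S} {Y : Ω → T} {Z : Ω → R}
    (h : MS (fun ω => (X ω, (Y ω, Z ω)))) (s : S) (t : T) :
    pd μ (fun ω => (X ω, Y ω)) (s, t)
      = ∑ r, pd μ (fun ω => (X ω, (Y ω, Z ω))) (s, (t, r)) := by
  classical
  have hset : (fun ω => (X ω, Y ω)) ⁻¹' {(s, t)}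
      = (fun ω => (X ω, (Y ω, Z ω))) ⁻¹'
        ↑(({s} : Finset S) ×ˢ (({t} : Finset T) ×ˢ (Finset.univ : Finset R))) := by
    ext ω; simp [Prod.ext_iff, eq_comm]
  rw [pd, hset, pd_eq_sum_preimage h, Finset.sum_product, Finset.sum_singleton,
    Finset.sum_product, Finset.sum_singleton]

lemma ent_SSA {X : Ω → S} {Y : Ω → T} {Z : Ω → R}
    (hY : MS Y) (hXY : MS (fun ω => (X ω, Y ω))) (hYZ : MS (fun ω => (Y ω, Z ω)))
    (hXYZ : MS (fun ω => (X ω, (Y ω, Z ω)))) :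
    ent μ (fun ω => (X ω, (Y ω, Z ω))) + ent μ Y
      ≤ ent μ (fun ω => (X ω, Y ω)) + ent μ (fun ω => (Y ω, Z ω)) := by
  classical
  set p : S × (T × R) → ℝ := pd μ (fun ω => (X ω, (Y ω, Z ω))) with hp
  set q : S × (T × R) → ℝ := fun x =>
    pd μ (fun ω => (X ω, Y ω)) (x.1, x.2.1) * pd μ (fun ω => (Y ω, Z ω)) x.2 / pd μ Y x.2.1
    with hq
  have hpY : ∀ t, pd μ Y t = ∑ r, pd μ (fun ω => (Y ω, Z ω)) (t, r) := fun t => pd_fst hYZ t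
  have hqnn : ∀ x, 0 ≤ q x := fun x =>
    div_nonneg (mul_nonneg (pd_nonneg _ _) (pd_nonneg _ _)) (pd_nonneg _ _)
  have hsum1 : ∀ t : T, ∑ s, pd μ (fun ω => (X ω, Y ω)) (s, t) = pd μ Y t :=
    fun t => (pd_snd hXY t).symm
  have hXYle : ∀ s t, pd μ (fun ω => (X ω, Y ω)) (s, t) ≤ pd μ Y t := by
    intro s t
    rw [← hsum1 t]
    exact Finset.single_le_sum (f := fun s' => pd μ (fun ω => (X ω, Y ω)) (s', t))
      (fun s' _ => pd_nonneg _ _) (Finset.mem_univ s)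
  have hYZle : ∀ t r, pd μ (fun ω => (Y ω, Z ω)) (t, r) ≤ pd μ Y t := by
    intro t r
    rw [hpY t]
    exact Finset.single_le_sum (f := fun r' => pd μ (fun ω => (Y ω, Z ω)) (t, r'))
      (fun r' _ => pd_nonneg _ _) (Finset.mem_univ r)
  have hm12 : ∀ s t, pd μ (fun ω => (X ω, Y ω)) (s, t) = ∑ r, p (s, (t, r)) :=
    fun s t => pd_12 hXYZ s t
  have hm23 : ∀ b : T × R, pd μ (fun ω => (Y ω, Z ω)) b = ∑ s, p (s, b) :=
    fun b => pd_snd hXYZ b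
  have hsupp : ∀ x : S × (T × R), q x = 0 → p x = 0 := by
    rintro ⟨s, t, r⟩ h0
    by_contra hne
    have hppos : 0 < p (s, (t, r)) := lt_of_le_of_ne (pd_nonneg _ _) (Ne.symm hne)
    have h1 : 0 < pd μ (fun ω => (X ω, Y ω)) (s, t) := by
      rw [hm12 s t]
      refine lt_of_lt_of_le hppos ?_
      exact Finset.single_le_sum (f := fun r' => p (s, (t, r')))
        (fun r' _ => pd_nonneg _ _) (Finset.mem_univ r)
    have h2 : 0 < pd μ (fun ω => (Y ω, Z ω)) (t, r) := by
      rw [hm23 (t, r)]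
      refine lt_of_lt_of_le hppos ?_
      exact Finset.single_le_sum (f := fun s' => p (s', (t, r)))
        (fun s' _ => pd_nonneg _ _) (Finset.mem_univ s)
    have h3 : 0 < pd μ Y t := lt_of_lt_of_le h2 (hYZle t r)
    have : 0 < q (s, (t, r)) := by
      rw [hq]
      exact div_pos (mul_pos h1 h2) h3
    rw [h0] at this
    exact lt_irrefl 0 this
  have hpos : ∀ s t r, p (s, (t, r)) ≠ 0 →
      0 < pd μ (fun ω => (X ω, Y ω)) (s, t) ∧ 0 < pd μ (fun ω => (Y ω, Z ω)) (t, r)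
        ∧ 0 < pd μ Y t := by
    intro s t r hne
    have hppos : 0 < p (s, (t, r)) := lt_of_le_of_ne (pd_nonneg _ _) (Ne.symm hne)
    have h1 : 0 < pd μ (fun ω => (X ω, Y ω)) (s, t) := by
      rw [hm12 s t]
      refine lt_of_lt_of_le hppos ?_
      exact Finset.single_le_sum (f := fun r' => p (s, (t, r')))
        (fun r' _ => pd_nonneg _ _) (Finset.mem_univ r)
    have h2 : 0 < pd μ (fun ω => (Y ω, Z ω)) (t, r) := by
      rw [hm23 (t, r)]
      refine lt_of_lt_of_le hppos ?_
      exact Finset.single_le_sum (f := fun s' => p (s', (t, r)))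
        (fun s' _ => pd_nonneg _ _) (Finset.mem_univ s)
    exact ⟨h1, h2, lt_of_lt_of_le h2 (hYZle t r)⟩
  have hqsum : ∑ x : S × (T × R), q x ≤ 1 := by
    have regroup : ∑ x : S × (T × R), q x = ∑ t, ∑ s, ∑ r, q (s, (t, r)) := by
      rw [Fintype.sum_prod_type]
      rw [show (∑ s, ∑ b : T × R, q (s, b)) = ∑ s, ∑ t, ∑ r, q (s, (t, r)) from
        Finset.sum_congr rfl fun s _ => by rw [Fintype.sum_prod_type]]
      exact Finset.sum_comm
    have per_t : ∀ t : T, ∑ s, ∑ r, q (s, (t, r)) ≤ pd μ Y t := by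
      intro t
      by_cases h0 : pd μ Y t = 0
      · have hz : ∑ s, ∑ r, q (s, (t, r)) = 0 := by
          refine Finset.sum_eq_zero fun s _ => Finset.sum_eq_zero fun r _ => ?_
          have hXY0 : pd μ (fun ω => (X ω, Y ω)) (s, t) = 0 :=
            le_antisymm (by rw [← h0]; exact hXYle s t) (pd_nonneg _ _)
          rw [hq]; simp only
          rw [hXY0, zero_mul, zero_div]
        rw [hz]
        exact pd_nonneg _ _
      · have inner : ∀ s, ∑ r, q (s, (t, r))
            = pd μ (fun ω => (X ω, Y ω)) (s, t)
              * (∑ r, pd μ (fun ω => (Y ω, Z ω)) (t, r)) / pd μ Y t := by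
          intro s
          rw [show (fun r => q (s, (t, r)))
              = fun r => pd μ (fun ω => (X ω, Y ω)) (s, t)
                * pd μ (fun ω => (Y ω, Z ω)) (t, r) / pd μ Y t from rfl]
          rw [← Finset.sum_div, ← Finset.mul_sum]
        rw [Finset.sum_congr rfl fun s _ => inner s, ← Finset.sum_div, ← Finset.sum_mul,
          hsum1 t, ← hpY t, mul_div_assoc, div_self h0, mul_one]
    calc ∑ x : S × (T × R), q x = ∑ t, ∑ s, ∑ r, q (s, (t, r)) := regroup
    _ ≤ ∑ t, pd μ Y t := Finset.sum_le_sum fun t _ => per_t t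
    _ = 1 := sum_pd hY
  have hgib := gibbs (p := p) (q := q) (fun x => pd_nonneg _ _) hqnn (sum_pd hXYZ) hqsum hsupp
  have point : ∀ x : S × (T × R), p x * Real.log (q x)
      = p x * Real.log (pd μ (fun ω => (X ω, Y ω)) (x.1, x.2.1))
        + p x * Real.log (pd μ (fun ω => (Y ω, Z ω)) x.2)
        - p x * Real.log (pd μ Y x.2.1) := by
    rintro ⟨s, t, r⟩
    by_cases hpx : p (s, (t, r)) = 0
    · simp [hpx]
    · obtain ⟨h1, h2, h3⟩ := hpos s t r hpx
      have : q (s, (t, r)) = pd μ (fun ω => (X ω, Y ω)) (s, t)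
          * pd μ (fun ω => (Y ω, Z ω)) (t, r) / pd μ Y t := rfl
      rw [this, Real.log_div (ne_of_gt (mul_pos h1 h2)) (ne_of_gt h3),
        Real.log_mul (ne_of_gt h1) (ne_of_gt h2)]
      ring
  have S1 : ∑ x : S × (T × R), p x * Real.log (pd μ (fun ω => (X ω, Y ω)) (x.1, x.2.1))
      = ∑ u : S × T, pd μ (fun ω => (X ω, Y ω)) u * Real.log (pd μ (fun ω => (X ω, Y ω)) u) := by
    rw [Fintype.sum_prod_type, Fintype.sum_prod_type]
    refine Finset.sum_congr rfl fun s _ => ?_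
    rw [Fintype.sum_prod_type]
    refine Finset.sum_congr rfl fun t _ => ?_
    trans ∑ r, p (s, (t, r)) * Real.log (pd μ (fun ω => (X ω, Y ω)) (s, t))
    · exact Finset.sum_congr rfl fun r _ => rfl
    · rw [← Finset.sum_mul, ← hm12 s t]
  have S2 : ∑ x : S × (T × R), p x * Real.log (pd μ (fun ω => (Y ω, Z ω)) x.2)
      = ∑ b : T × R, pd μ (fun ω => (Y ω, Z ω)) b * Real.log (pd μ (fun ω => (Y ω, Z ω)) b) := by
    rw [Fintype.sum_prod_type_right]
    refine Finset.sum_congr rfl fun b _ => ?_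
    trans ∑ s, p (s, b) * Real.log (pd μ (fun ω => (Y ω, Z ω)) b)
    · exact Finset.sum_congr rfl fun s _ => rfl
    · rw [← Finset.sum_mul, ← hm23 b]
  have S3 : ∑ x : S × (T × R), p x * Real.log (pd μ Y x.2.1)
      = ∑ t, pd μ Y t * Real.log (pd μ Y t) := by
    rw [Fintype.sum_prod_type_right]
    trans ∑ b : T × R, pd μ (fun ω => (Y ω, Z ω)) b * Real.log (pd μ Y b.1)
    · refine Finset.sum_congr rfl fun b _ => ?_
      trans ∑ s, p (s, b) * Real.log (pd μ Y b.1)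
      · exact Finset.sum_congr rfl fun s _ => rfl
      · rw [← Finset.sum_mul, ← hm23 b]
    · rw [Fintype.sum_prod_type]
      trans ∑ t, ∑ r, pd μ (fun ω => (Y ω, Z ω)) (t, r) * Real.log (pd μ Y t)
      · exact Finset.sum_congr rfl fun t _ => Finset.sum_congr rfl fun r _ => rfl
      · refine Finset.sum_congr rfl fun t _ => ?_
        rw [← Finset.sum_mul, ← hpY t]
  have hsplit : ∑ x : S × (T × R), p x * Real.log (q x)
      = (∑ u : S × T, pd μ (fun ω => (X ω, Y ω)) u * Real.log (pd μ (fun ω => (X ω, Y ω)) u))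
        + (∑ b : T × R, pd μ (fun ω => (Y ω, Z ω)) b * Real.log (pd μ (fun ω => (Y ω, Z ω)) b))
        - ∑ t, pd μ Y t * Real.log (pd μ Y t) := by
    rw [Finset.sum_congr rfl fun x _ => point x, Finset.sum_sub_distrib, Finset.sum_add_distrib,
      S1, S2, S3]
  have hfin := hgib.1
  rw [hsplit] at hfin
  have hL : ent μ (fun ω => (X ω, (Y ω, Z ω))) = ∑ x : S × (T × R), Real.negMulLog (p x) := rfl
  rw [ent_eq_neg_sum Y, ent_eq_neg_sum (fun ω => (X ω, Y ω)), ent_eq_neg_sum (fun ω => (Y ω, Z ω)),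
    hL]
  linarith

end Ent3

section PairMS

variable {Ω : Type*} [MeasurableSpace Ω] {S T : Type*}

lemma preimage_pair_singleton (X : Ω → S) (Y : Ω → T) (s : S) (t : T) :
    (fun ω => (X ω, Y ω)) ⁻¹' {(s, t)} = X ⁻¹' {s} ∩ Y ⁻¹' {t} := by
  ext ω; simp [Prod.ext_iff]

lemma MS.pair {X : Ω → S} {Y : Ω → T} (hX : MS X) (hY : MS Y) :
    MS (fun ω => (X ω, Y ω)) := by
  rintro ⟨s, t⟩
  rw [preimage_pair_singleton]
  exact (hX s).inter (hY t)

end PairMS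

section Ent4

variable {Ω : Type*} [MeasurableSpace Ω] {μ : Measure Ω} [IsProbabilityMeasure μ]
variable {S T : Type*} [Fintype S] [Fintype T]
  [MeasurableSpace S] [MeasurableSingletonClass S]
  [MeasurableSpace T] [MeasurableSingletonClass T]
variable {X : Ω → S} {Y : Ω → T}

lemma pd_pair_of_indepFun (hX : Measurable X) (hY : Measurable Y) (h : IndepFun X Y μ)
    (s : S) (t : T) :
    pd μ (fun ω => (X ω, Y ω)) (s, t) = pd μ X s * pd μ Y t := by
  have hm := h.measure_inter_preimage_eq_mul {s} {t} (measurableSet_singleton s)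
    (measurableSet_singleton t)
  rw [pd, preimage_pair_singleton, hm, ENNReal.toReal_mul]
  rfl

lemma ent_pair_of_indepFun (hX : Measurable X) (hY : Measurable Y) (h : IndepFun X Y μ) :
    ent μ (fun ω => (X ω, Y ω)) = ent μ X + ent μ Y := by
  classical
  have hpd : ∀ x : S × T, pd μ (fun ω => (X ω, Y ω)) x = pd μ X x.1 * pd μ Y x.2 := by
    rintro ⟨s, t⟩; exact pd_pair_of_indepFun hX hY h s t
  unfold ent
  rw [Finset.sum_congr rfl fun x _ => by rw [hpd x, Real.negMulLog_mul]]
  rw [Finset.sum_add_distrib]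
  have e1 : ∑ x : S × T, pd μ Y x.2 * Real.negMulLog (pd μ X x.1)
      = ∑ s, Real.negMulLog (pd μ X s) := by
    rw [Fintype.sum_prod_type]
    trans ∑ s, (∑ t, pd μ Y t) * Real.negMulLog (pd μ X s)
    · exact Finset.sum_congr rfl fun s _ => by rw [Finset.sum_mul]
    · rw [sum_pd (MS.of_measurable hY)]
      simp
  have e2 : ∑ x : S × T, pd μ X x.1 * Real.negMulLog (pd μ Y x.2)
      = ∑ t, Real.negMulLog (pd μ Y t) := by
    rw [Fintype.sum_prod_type_right]
    trans ∑ t, (∑ s, pd μ X s) * Real.negMulLog (pd μ Y t)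
    · exact Finset.sum_congr rfl fun t _ => by rw [Finset.sum_mul]
    · rw [sum_pd (MS.of_measurable hX)]
      simp
  rw [e1, e2]

lemma indepFun_of_pd_pair (hX : Measurable X) (hY : Measurable Y)
    (h : ∀ s t, pd μ (fun ω => (X ω, Y ω)) (s, t) = pd μ X s * pd μ Y t) :
    IndepFun X Y μ := by
  classical
  rw [indepFun_iff_measure_inter_preimage_eq_mul]
  intro E F _ _
  have hsing : ∀ (s : S) (t : T),
      μ (X ⁻¹' {s} ∩ Y ⁻¹' {t}) = μ (X ⁻¹' {s}) * μ (Y ⁻¹' {t}) := by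
    intro s t
    have h1 := h s t
    rw [pd, preimage_pair_singleton, pd, pd, ← ENNReal.toReal_mul] at h1
    exact (ENNReal.toReal_eq_toReal_iff' (measure_ne_top μ _)
      (ENNReal.mul_ne_top (measure_ne_top μ _) (measure_ne_top μ _))).mp h1
  have hEfin : E.Finite := Set.toFinite E
  have hFfin : F.Finite := Set.toFinite F
  have hXE : μ (X ⁻¹' E) = ∑ s ∈ hEfin.toFinset, μ (X ⁻¹' {s}) := by
    have h1 : ∑ s ∈ hEfin.toFinset, μ (X ⁻¹' {s}) = μ (X ⁻¹' ↑hEfin.toFinset) :=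
      sum_measure_preimage_singleton _ (fun s _ => hX (measurableSet_singleton s))
    rw [Set.Finite.coe_toFinset] at h1
    exact h1.symm
  have hYF : μ (Y ⁻¹' F) = ∑ t ∈ hFfin.toFinset, μ (Y ⁻¹' {t}) := by
    have h1 : ∑ t ∈ hFfin.toFinset, μ (Y ⁻¹' {t}) = μ (Y ⁻¹' ↑hFfin.toFinset) :=
      sum_measure_preimage_singleton _ (fun t _ => hY (measurableSet_singleton t))
    rw [Set.Finite.coe_toFinset] at h1
    exact h1.symm
  have hset : X ⁻¹' E ∩ Y ⁻¹' F = (fun ω => (X ω, Y ω)) ⁻¹' ↑(hEfin.toFinset ×ˢ hFfin.toFinset) := by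
    ext ω
    simp only [Set.mem_inter_iff, Set.mem_preimage, Finset.coe_product, Set.mem_prod,
      Finset.mem_coe, Set.Finite.mem_toFinset]
  have hmeaspair : ∀ x : S × T, MeasurableSet ((fun ω => (X ω, Y ω)) ⁻¹' {x}) := by
    rintro ⟨s, t⟩
    rw [preimage_pair_singleton]
    exact (hX (measurableSet_singleton s)).inter (hY (measurableSet_singleton t))
  have hkey : μ (X ⁻¹' E ∩ Y ⁻¹' F)
      = ∑ x ∈ hEfin.toFinset ×ˢ hFfin.toFinset, μ ((fun ω => (X ω, Y ω)) ⁻¹' {x}) := by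
    rw [hset, ← sum_measure_preimage_singleton _ (fun x _ => hmeaspair x)]
  rw [hkey, Finset.sum_product, hXE, hYF, Finset.sum_mul_sum]
  refine Finset.sum_congr rfl fun s _ => Finset.sum_congr rfl fun t _ => ?_
  rw [preimage_pair_singleton, hsing s t]

end Ent4

section Proc

variable {Ω : Type*} [MeasurableSpace Ω] {μ : Measure Ω} [IsProbabilityMeasure μ]
variable {γ : Type*} [MeasurableSpace γ]

/-- block of a process: `blk X s n ω k = X (k + s) ω`. -/
def blk (X : ℕ → Ω → γ) (s n : ℕ) : Ω → (Fin n → γ) := fun ω k => X ((k : ℕ) + s) ω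

lemma blk_measurable {X : ℕ → Ω → γ} (hX : ∀ k, Measurable (X k)) (s n : ℕ) :
    Measurable (blk X s n) :=
  measurable_pi_lambda _ fun k => hX _

/-- appending two tuples -/
def app {α : Type*} (n m : ℕ) : ((Fin n → α) × (Fin m → α)) → (Fin (n + m) → α) :=
  fun p => Fin.append p.1 p.2

lemma app_inj {α : Type*} (n m : ℕ) : Function.Injective (app (α := α) n m) := by
  rintro ⟨a1, a2⟩ ⟨b1, b2⟩ h
  simp only [app] at h
  have h1 : a1 = b1 := by
    funext i
    have := congrFun h (Fin.castAdd m i)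
    rwa [Fin.append_left, Fin.append_left] at this
  have h2 : a2 = b2 := by
    funext j
    have := congrFun h (Fin.natAdd n j)
    rwa [Fin.append_right, Fin.append_right] at this
  rw [h1, h2]

lemma blk_app (X : ℕ → Ω → γ) (s n m : ℕ) :
    blk X s (n + m) = fun ω => app n m (blk X s n ω, blk X (s + n) m ω) := by
  funext ω k
  refine Fin.addCases (motive := fun k => blk X s (n + m) ω k
    = app n m (blk X s n ω, blk X (s + n) m ω) k) ?_ ?_ k
  · intro i
    show X ((Fin.castAdd m i : Fin (n + m)) + s) ω = _
    rw [show app n m (blk X s n ω, blk X (s + n) m ω) (Fin.castAdd m i)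
        = blk X s n ω i from Fin.append_left _ _ i]
    simp [blk]
  · intro j
    show X ((Fin.natAdd n j : Fin (n + m)) + s) ω = _
    rw [show app n m (blk X s n ω, blk X (s + n) m ω) (Fin.natAdd n j)
        = blk X (s + n) m ω j from Fin.append_right _ _ j]
    show X (n + (j : ℕ) + s) ω = X ((j : ℕ) + (s + n)) ω
    congr 1
    omega

/-- stationarity: the law of the shifted full process equals that of the process. -/
lemma map_shift {X : ℕ → Ω → γ} (hXm : ∀ k, Measurable (X k))
    (hstat : Measure.map (fun ω (k : ℕ) => X (k + 1) ω) μ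
      = Measure.map (fun ω (k : ℕ) => X k ω) μ) (s : ℕ) :
    Measure.map (fun ω (k : ℕ) => X (k + s) ω) μ = Measure.map (fun ω (k : ℕ) => X k ω) μ := by
  induction s with
  | zero => rfl
  | succ s ih =>
    have hσ : Measurable (fun (y : ℕ → γ) (k : ℕ) => y (k + 1)) :=
      measurable_pi_lambda _ fun k => measurable_pi_apply _
    have hfs : Measurable (fun ω (k : ℕ) => X (k + s) ω) :=
      measurable_pi_lambda _ fun k => hXm _
    have hf0 : Measurable (fun ω (k : ℕ) => X k ω) :=
      measurable_pi_lambda _ fun k => hXm _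
    have h1 : (fun ω (k : ℕ) => X (k + (s + 1)) ω)
        = (fun (y : ℕ → γ) (k : ℕ) => y (k + 1)) ∘ (fun ω (k : ℕ) => X (k + s) ω) := by
      funext ω
      funext k
      show X (k + (s + 1)) ω = X ((k + 1) + s) ω
      congr 1
      omega
    rw [h1, ← Measure.map_map hσ hfs, ih, Measure.map_map hσ hf0]
    exact hstat

/-- entropy of a block-functional is shift invariant. -/
lemma ent_comp_shift {X : ℕ → Ω → γ} (hXm : ∀ k, Measurable (X k))
    (hstat : Measure.map (fun ω (k : ℕ) => X (k + 1) ω) μ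
      = Measure.map (fun ω (k : ℕ) => X k ω) μ)
    {S' : Type*} [Fintype S'] [MeasurableSpace S'] [MeasurableSingletonClass S']
    {G : (ℕ → γ) → S'} (hG : Measurable G) (s : ℕ) :
    ent μ (fun ω => G (fun k => X (k + s) ω)) = ent μ (fun ω => G (fun k => X k ω)) := by
  have hfs : Measurable (fun ω (k : ℕ) => X (k + s) ω) :=
    measurable_pi_lambda _ fun k => hXm _
  have hf0 : Measurable (fun ω (k : ℕ) => X k ω) :=
    measurable_pi_lambda _ fun k => hXm _
  have hpd : ∀ u : S', pd μ (fun ω => G (fun k => X (k + s) ω)) u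
      = pd μ (fun ω => G (fun k => X k ω)) u := by
    intro u
    rw [pd, pd,
      show (fun ω => G (fun k => X (k + s) ω)) ⁻¹' {u}
        = (fun ω (k : ℕ) => X (k + s) ω) ⁻¹' (G ⁻¹' {u}) from rfl,
      show (fun ω => G (fun k => X k ω)) ⁻¹' {u}
        = (fun ω (k : ℕ) => X k ω) ⁻¹' (G ⁻¹' {u}) from rfl,
      ← Measure.map_apply hfs (hG (measurableSet_singleton u)),
      ← Measure.map_apply hf0 (hG (measurableSet_singleton u)),
      map_shift hXm hstat s]
  unfold ent
  exact Finset.sum_congr rfl fun u _ => by rw [hpd u]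

/-- conditional subadditivity of entropy -/
lemma cond_subadd {S1 S2 T1 T2 : Type*} [Fintype S1] [Fintype S2] [Fintype T1] [Fintype T2]
    {Z1 : Ω → S1} {Z2 : Ω → S2} {A1 : Ω → T1} {A2 : Ω → T2}
    (hZ1 : MS Z1) (hZ2 : MS Z2) (hA1 : MS A1) (hA2 : MS A2) :
    ent μ (fun ω => ((Z1 ω, Z2 ω), (A1 ω, A2 ω))) - ent μ (fun ω => (Z1 ω, Z2 ω))
      ≤ (ent μ (fun ω => (Z1 ω, A1 ω)) - ent μ Z1)
        + (ent μ (fun ω => (Z2 ω, A2 ω)) - ent μ Z2) := by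
  classical
  have hZp : MS (fun ω => (Z1 ω, Z2 ω)) := hZ1.pair hZ2
  -- (i)  SSA  X := A1, Y := (Z1,Z2), Z := A2
  have i1 : ent μ (fun ω => (A1 ω, ((Z1 ω, Z2 ω), A2 ω))) + ent μ (fun ω => (Z1 ω, Z2 ω))
      ≤ ent μ (fun ω => (A1 ω, (Z1 ω, Z2 ω))) + ent μ (fun ω => ((Z1 ω, Z2 ω), A2 ω)) :=
    ent_SSA hZp (hA1.pair hZp) (hZp.pair hA2) (hA1.pair (hZp.pair hA2))
  -- (ii) SSA  X := A1, Y := Z1, Z := Z2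
  have i2 : ent μ (fun ω => (A1 ω, (Z1 ω, Z2 ω))) + ent μ Z1
      ≤ ent μ (fun ω => (A1 ω, Z1 ω)) + ent μ (fun ω => (Z1 ω, Z2 ω)) :=
    ent_SSA hZ1 (hA1.pair hZ1) hZp (hA1.pair hZp)
  -- (iii) SSA X := A2, Y := Z2, Z := Z1
  have i3 : ent μ (fun ω => (A2 ω, (Z2 ω, Z1 ω))) + ent μ Z2
      ≤ ent μ (fun ω => (A2 ω, Z2 ω)) + ent μ (fun ω => (Z2 ω, Z1 ω)) :=
    ent_SSA hZ2 (hA2.pair hZ2) (hZ2.pair hZ1) (hA2.pair (hZ2.pair hZ1))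
  -- identifications via injections
  have e1 : ent μ (fun ω => ((Z1 ω, Z2 ω), (A1 ω, A2 ω)))
      = ent μ (fun ω => (A1 ω, ((Z1 ω, Z2 ω), A2 ω))) := by
    have := ent_comp_inj (μ := μ) (X := fun ω => (A1 ω, ((Z1 ω, Z2 ω), A2 ω)))
      (hA1.pair (hZp.pair hA2))
      (g := fun x : T1 × ((S1 × S2) × T2) => (x.2.1, (x.1, x.2.2)))
      (fun a b hab =>
        congrArg (fun y : (S1 × S2) × (T1 × T2) => ((y.2.1, (y.1, y.2.2)) : T1 × ((S1 × S2) × T2))) hab)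
    simpa using this
  have e2 : ent μ (fun ω => (A1 ω, Z1 ω)) = ent μ (fun ω => (Z1 ω, A1 ω)) := by
    have := ent_comp_inj (μ := μ) (X := fun ω => (A1 ω, Z1 ω)) (hA1.pair hZ1)
      (g := fun x : T1 × S1 => (x.2, x.1))
      (fun a b hab => congrArg (fun y : S1 × T1 => ((y.2, y.1) : T1 × S1)) hab)
    simpa using this.symm
  have e3 : ent μ (fun ω => (A2 ω, (Z2 ω, Z1 ω))) = ent μ (fun ω => ((Z1 ω, Z2 ω), A2 ω)) := by
    have := ent_comp_inj (μ := μ) (X := fun ω => (A2 ω, (Z2 ω, Z1 ω)))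
      (hA2.pair (hZ2.pair hZ1))
      (g := fun x : T2 × (S2 × S1) => ((x.2.2, x.2.1), x.1))
      (fun a b hab =>
        congrArg (fun y : (S1 × S2) × T2 => ((y.2, (y.1.2, y.1.1)) : T2 × (S2 × S1))) hab)
    simpa using this.symm
  have e4 : ent μ (fun ω => (A2 ω, Z2 ω)) = ent μ (fun ω => (Z2 ω, A2 ω)) := by
    have := ent_comp_inj (μ := μ) (X := fun ω => (A2 ω, Z2 ω)) (hA2.pair hZ2)
      (g := fun x : T2 × S2 => (x.2, x.1))
      (fun a b hab => congrArg (fun y : S2 × T2 => ((y.2, y.1) : T2 × S2)) hab)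
    simpa using this.symm
  have e5 : ent μ (fun ω => (Z2 ω, Z1 ω)) = ent μ (fun ω => (Z1 ω, Z2 ω)) := by
    have := ent_comp_inj (μ := μ) (X := fun ω => (Z2 ω, Z1 ω)) (hZ2.pair hZ1)
      (g := fun x : S2 × S1 => (x.2, x.1))
      (fun a b hab => congrArg (fun y : S1 × S2 => ((y.2, y.1) : S2 × S1)) hab)
    simpa using this.symm
  rw [e1]
  rw [e3] at i3
  rw [e2] at i2
  rw [e4, e5] at i3
  linarith

end Proc

end PPIN


open PPIN in
theorem pair_process_indep_of_noise
    {Ω A B C : Type*} [MeasurableSpace Ω]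
    [Fintype A] [Fintype B] [Fintype C]
    [MeasurableSpace A] [MeasurableSingletonClass A] [DiscreteMeasurableSpace A]
    [MeasurableSpace B] [MeasurableSingletonClass B] [DiscreteMeasurableSpace B]
    [MeasurableSpace C] [MeasurableSingletonClass C] [DiscreteMeasurableSpace C]
    (μ : Measure Ω) [IsProbabilityMeasure μ]
    (U : ℕ → Ω → A) (V : ℕ → Ω → B) (W : ℕ → Ω → C)
    (hUm : ∀ k, Measurable (U k)) (hVm : ∀ k, Measurable (V k))
    (hWm : ∀ k, Measurable (W k))
    -- joint stationarity of the triple process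
    (hstat : Measure.map (fun ω (k : ℕ) => (U (k + 1) ω, V (k + 1) ω, W (k + 1) ω)) μ =
      Measure.map (fun ω (k : ℕ) => (U k ω, V k ω, W k ω)) μ)
    -- U has zero entropy
    (hU0 : procEntropy μ U = 0)
    -- V is ergodic (its law is an ergodic measure for the shift)
    (hVerg : Ergodic (fun (v : ℕ → B) (k : ℕ) => v (k + 1))
      (Measure.map (fun ω (k : ℕ) => V k ω) μ))
    -- W is i.i.d.
    (hWiid : iIndepFun W μ)
    (hWid : ∀ k, Measure.map (W k) μ = Measure.map (W 0) μ)
    -- V is independent of W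
    (hVW : IndepFun (fun ω (k : ℕ) => V k ω) (fun ω (k : ℕ) => W k ω) μ) :
    IndepFun (fun ω (k : ℕ) => (U k ω, V k ω)) (fun ω (k : ℕ) => W k ω) μ := by
  classical
  -- the joint (U,V) process and the ((U,V),W) process
  set F : ℕ → Ω → A × B := fun k ω => (U k ω, V k ω) with hF
  set Q : ℕ → Ω → (A × B) × C := fun k ω => ((U k ω, V k ω), W k ω) with hQ
  have hFm : ∀ k, Measurable (F k) := fun k => (hUm k).prodMk (hVm k)
  have hQm : ∀ k, Measurable (Q k) := fun k => ((hUm k).prodMk (hVm k)).prodMk (hWm k)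
  -- stationarity of Q
  have hseqm : Measurable (fun (y : ℕ → A × (B × C)) (k : ℕ) =>
      (((y k).1, (y k).2.1), (y k).2.2)) :=
    measurable_pi_lambda _ fun k =>
      (((measurable_pi_apply k).fst.prodMk (measurable_pi_apply k).snd.fst).prodMk
        (measurable_pi_apply k).snd.snd)
  have htrip1 : Measurable (fun ω (k : ℕ) => (U (k + 1) ω, V (k + 1) ω, W (k + 1) ω)) :=
    measurable_pi_lambda _ fun k => (hUm _).prodMk ((hVm _).prodMk (hWm _))
  have htrip0 : Measurable (fun ω (k : ℕ) => (U k ω, V k ω, W k ω)) :=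
    measurable_pi_lambda _ fun k => (hUm _).prodMk ((hVm _).prodMk (hWm _))
  have hQstat : Measure.map (fun ω (k : ℕ) => Q (k + 1) ω) μ
      = Measure.map (fun ω (k : ℕ) => Q k ω) μ := by
    have l1 : (fun ω (k : ℕ) => Q (k + 1) ω)
        = (fun (y : ℕ → A × (B × C)) (k : ℕ) => (((y k).1, (y k).2.1), (y k).2.2))
          ∘ (fun ω (k : ℕ) => (U (k + 1) ω, V (k + 1) ω, W (k + 1) ω)) := rfl
    have l0 : (fun ω (k : ℕ) => Q k ω)
        = (fun (y : ℕ → A × (B × C)) (k : ℕ) => (((y k).1, (y k).2.1), (y k).2.2))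
          ∘ (fun ω (k : ℕ) => (U k ω, V k ω, W k ω)) := rfl
    rw [l1, l0, ← Measure.map_map hseqm htrip1, ← Measure.map_map hseqm htrip0, hstat]
  -- measurability & MS of blocks
  have hPbm : ∀ s n, Measurable (blk F s n) := fun s n => blk_measurable hFm s n
  have hWbm : ∀ s n, Measurable (blk W s n) := fun s n => blk_measurable hWm s n
  have hUbm : ∀ s n, Measurable (blk U s n) := fun s n => blk_measurable hUm s n
  have hVbm : ∀ s n, Measurable (blk V s n) := fun s n => blk_measurable hVm s n
  have hPbMS : ∀ s n, MS (blk F s n) := fun s n => MS.of_measurable (hPbm s n)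
  have hWbMS : ∀ s n, MS (blk W s n) := fun s n => MS.of_measurable (hWbm s n)
  have hUbMS : ∀ s n, MS (blk U s n) := fun s n => MS.of_measurable (hUbm s n)
  have hVbMS : ∀ s n, MS (blk V s n) := fun s n => MS.of_measurable (hVbm s n)
  -- stationarity of block entropies
  have hstPW : ∀ s n, ent μ (fun ω => (blk F s n ω, blk W s n ω))
      = ent μ (fun ω => (blk F 0 n ω, blk W 0 n ω)) := by
    intro s n
    exact ent_comp_shift hQm hQstat
      (G := fun x : ℕ → (A × B) × C =>
        ((fun k : Fin n => (x (k : ℕ)).1), (fun k : Fin n => (x (k : ℕ)).2)))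
      ((measurable_pi_lambda _ fun k => (measurable_pi_apply _).fst).prodMk
        (measurable_pi_lambda _ fun k => (measurable_pi_apply _).snd)) s
  have hstP : ∀ s n, ent μ (blk F s n) = ent μ (blk F 0 n) := by
    intro s n
    exact ent_comp_shift hQm hQstat
      (G := fun x : ℕ → (A × B) × C => (fun k : Fin n => (x (k : ℕ)).1))
      (measurable_pi_lambda _ fun k => (measurable_pi_apply _).fst) s
  have hstW : ∀ s n, ent μ (blk W s n) = ent μ (blk W 0 n) := by
    intro s n
    exact ent_comp_shift hQm hQstat
      (G := fun x : ℕ → (A × B) × C => (fun k : Fin n => (x (k : ℕ)).2))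
      (measurable_pi_lambda _ fun k => (measurable_pi_apply _).snd) s
  have hstU : ∀ s n, ent μ (blk U s n) = ent μ (blk U 0 n) := by
    intro s n
    exact ent_comp_shift hQm hQstat
      (G := fun x : ℕ → (A × B) × C => (fun k : Fin n => (x (k : ℕ)).1.1))
      (measurable_pi_lambda _ fun k => (measurable_pi_apply _).fst.fst) s
  -- append identities
  have happP : ∀ s n m : ℕ, ent μ (blk F s (n + m))
      = ent μ (fun ω => (blk F s n ω, blk F (s + n) m ω)) := by
    intro s n m
    have h := ent_comp_inj (μ := μ) (X := fun ω => (blk F s n ω, blk F (s + n) m ω))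
      ((hPbMS s n).pair (hPbMS (s + n) m)) (g := app n m) (app_inj n m)
    rw [blk_app F s n m]
    exact h
  have happW : ∀ s n m : ℕ, ent μ (blk W s (n + m))
      = ent μ (fun ω => (blk W s n ω, blk W (s + n) m ω)) := by
    intro s n m
    have h := ent_comp_inj (μ := μ) (X := fun ω => (blk W s n ω, blk W (s + n) m ω))
      ((hWbMS s n).pair (hWbMS (s + n) m)) (g := app n m) (app_inj n m)
    rw [blk_app W s n m]
    exact h
  have happU : ∀ s n m : ℕ, ent μ (blk U s (n + m))
      = ent μ (fun ω => (blk U s n ω, blk U (s + n) m ω)) := by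
    intro s n m
    have h := ent_comp_inj (μ := μ) (X := fun ω => (blk U s n ω, blk U (s + n) m ω))
      ((hUbMS s n).pair (hUbMS (s + n) m)) (g := app n m) (app_inj n m)
    rw [blk_app U s n m]
    exact h
  have happPW : ∀ n m : ℕ, ent μ (fun ω => (blk F 0 (n + m) ω, blk W 0 (n + m) ω))
      = ent μ (fun ω => ((blk F 0 n ω, blk F n m ω), (blk W 0 n ω, blk W n m ω))) := by
    intro n m
    have h := ent_comp_inj (μ := μ)
      (X := fun ω => ((blk F 0 n ω, blk F n m ω), (blk W 0 n ω, blk W n m ω)))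
      (((hPbMS 0 n).pair (hPbMS n m)).pair ((hWbMS 0 n).pair (hWbMS n m)))
      (g := Prod.map (app n m) (app n m)) ((app_inj n m).prodMap (app_inj n m))
    rw [blk_app F 0 n m, blk_app W 0 n m]
    simp only [Nat.zero_add]
    exact h
  -- quantities
  set eP : ℕ → ℝ := fun n => ent μ (blk F 0 n) with heP
  set eW : ℕ → ℝ := fun n => ent μ (blk W 0 n) with heW
  set eU : ℕ → ℝ := fun n => ent μ (blk U 0 n) with heU
  set c : ℕ → ℝ := fun n => ent μ (fun ω => (blk F 0 n ω, blk W 0 n ω)) - eP n with hc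
  -- trivial values at 0
  haveI hu1 : Unique (Fin 0 → A × B) := ⟨⟨Fin.elim0⟩, fun f => funext fun k => k.elim0⟩
  haveI hu2 : Unique (Fin 0 → C) := ⟨⟨Fin.elim0⟩, fun f => funext fun k => k.elim0⟩
  haveI hu3 : Unique (Fin 0 → A) := ⟨⟨Fin.elim0⟩, fun f => funext fun k => k.elim0⟩
  haveI hu12 : Unique ((Fin 0 → A × B) × (Fin 0 → C)) :=
    ⟨⟨(default, default)⟩, fun p => by
      obtain ⟨x, y⟩ := p
      rw [hu1.uniq x, hu2.uniq y]
      rfl⟩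
  have heP0 : eP 0 = 0 := ent_unique _
  have heW0 : eW 0 = 0 := ent_unique _
  have heU0 : eU 0 = 0 := ent_unique _
  have hc0 : c 0 = 0 := by
    have h1 : c 0 = ent μ (fun ω => (blk F 0 0 ω, blk W 0 0 ω)) - eP 0 := rfl
    rw [h1, ent_unique, heP0, sub_zero]
  -- c subadditive
  have hcsub : ∀ n m : ℕ, c (n + m) ≤ c n + c m := by
    intro n m
    have key := cond_subadd (μ := μ) (hPbMS 0 n) (hPbMS n m) (hWbMS 0 n) (hWbMS n m)
    have eq1 : ent μ (fun ω => (blk F 0 (n + m) ω, blk W 0 (n + m) ω))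
        = ent μ (fun ω => ((blk F 0 n ω, blk F n m ω), (blk W 0 n ω, blk W n m ω))) :=
      happPW n m
    have eq2 : eP (n + m) = ent μ (fun ω => (blk F 0 n ω, blk F n m ω)) := by
      have h0 : eP (n + m) = ent μ (blk F 0 (n + m)) := rfl
      have := happP 0 n m
      rw [Nat.zero_add] at this
      rw [h0, this]
    have eq3 : ent μ (fun ω => (blk F n m ω, blk W n m ω))
        = ent μ (fun ω => (blk F 0 m ω, blk W 0 m ω)) := hstPW n m
    have eq4 : ent μ (blk F n m) = eP m := hstP n m
    have hca : c (n + m) = ent μ (fun ω => (blk F 0 (n + m) ω, blk W 0 (n + m) ω)) - eP (n + m) := rfl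
    have hcb : c n = ent μ (fun ω => (blk F 0 n ω, blk W 0 n ω)) - eP n := rfl
    have hcc : c m = ent μ (fun ω => (blk F 0 m ω, blk W 0 m ω)) - eP m := rfl
    have hpn : eP n = ent μ (blk F 0 n) := rfl
    have hpm : eP m = ent μ (blk F 0 m) := rfl
    have h5 := key
    rw [eq3, eq4] at h5
    rw [hca, hcb, hcc, eq1, eq2]
    rw [hpn] at *
    linarith
  -- iterated subadditivity for c
  have hciter : ∀ n m : ℕ, c (n * m) ≤ m * c n := by
    intro n m
    induction m with
    | zero => simp [hc0]
    | succ m ih =>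
      have : c (n * (m + 1)) ≤ c (n * m) + c n := by
        rw [Nat.mul_succ]
        exact hcsub (n * m) n
      push_cast
      push_cast at ih
      linarith
  -- eU subadditive and iterated
  have hUsub : ∀ n m : ℕ, eU (n + m) ≤ eU n + eU m := by
    intro n m
    have e1 : eU (n + m) = ent μ (fun ω => (blk U 0 n ω, blk U n m ω)) := by
      have h0 : eU (n + m) = ent μ (blk U 0 (n + m)) := rfl
      have := happU 0 n m
      rw [Nat.zero_add] at this
      rw [h0, this]
    rw [e1]
    have hle := ent_pair_le (μ := μ) (hUbMS 0 n) (hUbMS n m) ((hUbMS 0 n).pair (hUbMS n m))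
    have e2 : ent μ (blk U n m) = eU m := hstU n m
    have e3 : ent μ (blk U 0 n) = eU n := rfl
    rw [e2, e3] at hle
    exact hle
  have hUiter : ∀ j l : ℕ, eU (j * l) ≤ j * eU l := by
    intro j l
    induction j with
    | zero => simp [heU0]
    | succ j ih =>
      have : eU ((j + 1) * l) ≤ eU (j * l) + eU l := by
        rw [Nat.succ_mul]
        exact hUsub (j * l) l
      push_cast
      push_cast at ih
      linarith
  -- W blocks are independent, so eW is additive
  have hWind : ∀ n m : ℕ, IndepFun (blk W 0 n) (blk W n m) μ := by
    intro n m
    have hdisj : Disjoint (Finset.range n)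
        ((Finset.range m).map ⟨fun j => j + n, add_left_injective n⟩) := by
      rw [Finset.disjoint_left]
      intro a ha hb
      rw [Finset.mem_range] at ha
      rw [Finset.mem_map] at hb
      obtain ⟨j, hj, hje⟩ := hb
      simp only [Function.Embedding.coeFn_mk] at hje
      omega
    have base := hWiid.indepFun_finset (Finset.range n)
      ((Finset.range m).map ⟨fun j => j + n, add_left_injective n⟩) hdisj hWm
    have hg1 : Measurable (fun (f : {x // x ∈ Finset.range n} → C) (k : Fin n) =>
        f ⟨(k : ℕ), Finset.mem_range.mpr k.isLt⟩) :=
      measurable_pi_lambda _ fun k => measurable_pi_apply _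
    have hg2 : Measurable (fun (f : {x // x ∈ (Finset.range m).map
          ⟨fun j => j + n, add_left_injective n⟩} → C) (k : Fin m) =>
        f ⟨(k : ℕ) + n, Finset.mem_map.mpr ⟨(k : ℕ), Finset.mem_range.mpr k.isLt, rfl⟩⟩) :=
      measurable_pi_lambda _ fun k => measurable_pi_apply _
    exact base.comp hg1 hg2
  have hWadd : ∀ n m : ℕ, eW (n + m) = eW n + eW m := by
    intro n m
    have e1 : eW (n + m) = ent μ (fun ω => (blk W 0 n ω, blk W n m ω)) := by
      have h0 : eW (n + m) = ent μ (blk W 0 (n + m)) := rfl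
      have := happW 0 n m
      rw [Nat.zero_add] at this
      rw [h0, this]
    rw [e1, ent_pair_of_indepFun (hWbm 0 n) (hWbm n m) (hWind n m)]
    have e2 : ent μ (blk W n m) = eW m := hstW n m
    have e3 : ent μ (blk W 0 n) = eW n := rfl
    rw [e2, e3]
  have hWiter : ∀ n m : ℕ, eW (n * m) = m * eW n := by
    intro n m
    induction m with
    | zero => simp [heW0]
    | succ m ih =>
      rw [Nat.mul_succ, hWadd (n * m) n, ih]
      push_cast
      ring
  -- upper bound : c n ≤ eW n
  have hupper : ∀ n, c n ≤ eW n := by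
    intro n
    have hle := ent_pair_le (μ := μ) (hPbMS 0 n) (hWbMS 0 n) ((hPbMS 0 n).pair (hWbMS 0 n))
    have hcb : c n = ent μ (fun ω => (blk F 0 n ω, blk W 0 n ω)) - eP n := rfl
    have hpn : eP n = ent μ (blk F 0 n) := rfl
    have hwn : eW n = ent μ (blk W 0 n) := rfl
    rw [hcb, hpn, hwn]
    linarith
  -- lower bound : eW n - eU n ≤ c n
  have hVWblk : ∀ n, IndepFun (blk V 0 n) (blk W 0 n) μ := by
    intro n
    have hrB : Measurable (fun (x : ℕ → B) (k : Fin n) => x (k : ℕ)) :=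
      measurable_pi_lambda _ fun k => measurable_pi_apply _
    have hrC : Measurable (fun (x : ℕ → C) (k : Fin n) => x (k : ℕ)) :=
      measurable_pi_lambda _ fun k => measurable_pi_apply _
    exact hVW.comp hrB hrC
  have hlower : ∀ n, eW n - eU n ≤ c n := by
    intro n
    -- ent of (V,W)-blocks ≤ ent of ((U,V),W)-blocks
    have h1 : ent μ (fun ω => (blk V 0 n ω, blk W 0 n ω))
        ≤ ent μ (fun ω => (blk F 0 n ω, blk W 0 n ω)) := by
      have := ent_comp_le (μ := μ) (X := fun ω => (blk F 0 n ω, blk W 0 n ω))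
        ((hPbMS 0 n).pair (hWbMS 0 n))
        (g := fun x : (Fin n → A × B) × (Fin n → C) => ((fun k : Fin n => (x.1 k).2), x.2))
      exact this
    have h2 : ent μ (fun ω => (blk V 0 n ω, blk W 0 n ω)) = ent μ (blk V 0 n) + eW n :=
      ent_pair_of_indepFun (hVbm 0 n) (hWbm 0 n) (hVWblk n)
    have h3 : eP n = ent μ (fun ω => (blk U 0 n ω, blk V 0 n ω)) := by
      have := ent_comp_inj (μ := μ) (X := fun ω => (blk U 0 n ω, blk V 0 n ω))
        ((hUbMS 0 n).pair (hVbMS 0 n))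
        (g := fun x : (Fin n → A) × (Fin n → B) => (fun k : Fin n => (x.1 k, x.2 k)))
        (fun a b hab => by
          have h1' := congrArg (fun y : Fin n → A × B => ((fun k => (y k).1, fun k => (y k).2)
            : (Fin n → A) × (Fin n → B))) hab
          exact h1')
      exact this
    have h4 : ent μ (fun ω => (blk U 0 n ω, blk V 0 n ω)) ≤ eU n + ent μ (blk V 0 n) :=
      ent_pair_le (μ := μ) (hUbMS 0 n) (hVbMS 0 n) ((hUbMS 0 n).pair (hVbMS 0 n))
    have hcb : c n = ent μ (fun ω => (blk F 0 n ω, blk W 0 n ω)) - eP n := rfl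
    have hun : eU n = ent μ (blk U 0 n) := rfl
    rw [hcb, h3]
    rw [hun] at *
    linarith
  -- U has vanishing entropy rate
  have hbe : ∀ m : ℕ, blockEntropy μ U m = eU m := by
    intro m
    rw [blockEntropy]
    have h0 : eU m = ent μ (blk U 0 m) := rfl
    rw [h0, ent]
    refine Finset.sum_congr rfl fun a _ => ?_
    rw [show {ω | ∀ k : Fin m, U (k : ℕ) ω = a k} = (blk U 0 m) ⁻¹' {a} by
      ext ω
      simp [blk, funext_iff]]
    rfl
  have hUsmall : ∀ ε : ℝ, 0 < ε → ∃ m : ℕ, 0 < m ∧ eU m < ε * m := by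
    intro ε hε
    have hlt : ⨅ n : {n : ℕ // 0 < n}, blockEntropy μ U n.1 / n.1 < ε := by
      rw [show ⨅ n : {n : ℕ // 0 < n}, blockEntropy μ U n.1 / n.1 = procEntropy μ U from rfl,
        hU0]
      exact hε
    obtain ⟨⟨m, hm⟩, hmlt⟩ := exists_lt_of_ciInf_lt hlt
    refine ⟨m, hm, ?_⟩
    rw [hbe m] at hmlt
    have hmpos : (0 : ℝ) < m := by exact_mod_cast hm
    rw [div_lt_iff₀ hmpos] at hmlt
    exact hmlt
  -- conclude c n = eW n
  have hce : ∀ n, ent μ (fun ω => (blk F 0 n ω, blk W 0 n ω)) = eP n + eW n := by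
    intro n
    have hge : eW n ≤ c n := by
      have hstep : ∀ ε : ℝ, 0 < ε → eW n - n * ε ≤ c n := by
        intro ε hε
        obtain ⟨m, hm, hum⟩ := hUsmall ε hε
        have hmpos : (0 : ℝ) < m := by exact_mod_cast hm
        have t1 : c (n * m) ≤ m * c n := hciter n m
        have t2 : eW (n * m) - eU (n * m) ≤ c (n * m) := hlower (n * m)
        have t3 : eW (n * m) = m * eW n := hWiter n m
        have t4 : eU (n * m) ≤ n * eU m := hUiter n m
        have t5 : (n : ℝ) * eU m ≤ n * (ε * m) := by
          have hn0 : (0 : ℝ) ≤ n := Nat.cast_nonneg n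
          nlinarith
        have : (m : ℝ) * eW n - n * ε * m ≤ m * c n := by
          push_cast at t1 t2 t3 t4 ⊢
          nlinarith
        nlinarith
      by_contra hcon
      push_neg at hcon
      have hn1 : (0 : ℝ) < (n : ℝ) + 1 := by positivity
      have hd : 0 < eW n - c n := by linarith
      have hchoice := hstep ((eW n - c n) / ((n : ℝ) + 1)) (div_pos hd hn1)
      have hfr : (n : ℝ) / ((n : ℝ) + 1) < 1 := by
        rw [div_lt_one hn1]; linarith
      have hlt2 : (n : ℝ) * ((eW n - c n) / ((n : ℝ) + 1)) < eW n - c n := by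
        calc (n : ℝ) * ((eW n - c n) / ((n : ℝ) + 1))
            = ((n : ℝ) / ((n : ℝ) + 1)) * (eW n - c n) := by ring
        _ < 1 * (eW n - c n) := by nlinarith [mul_pos (sub_pos.mpr hfr) hd]
        _ = eW n - c n := one_mul _
      linarith
    have hle := hupper n
    have hcw : c n = eW n := le_antisymm hle hge
    have hcb : c n = ent μ (fun ω => (blk F 0 n ω, blk W 0 n ω)) - eP n := rfl
    rw [hcb] at hcw
    linarith
  -- blockwise independence
  have hblockind : ∀ n, IndepFun (blk F 0 n) (blk W 0 n) μ := by
    intro n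
    refine indepFun_of_pd_pair (hPbm 0 n) (hWbm 0 n) ?_
    exact (ent_pair_le_and_eq (μ := μ) (hPbMS 0 n) (hWbMS 0 n)
      ((hPbMS 0 n).pair (hWbMS 0 n))).2 (hce n)
  -- from blocks to the full processes, via cylinders
  have hfm : Measurable (fun ω (k : ℕ) => (U k ω, V k ω)) :=
    measurable_pi_lambda _ fun k => (hUm k).prodMk (hVm k)
  have hgm : Measurable (fun ω (k : ℕ) => W k ω) :=
    measurable_pi_lambda _ fun k => hWm k
  set C1 : Set (Set Ω) :=
    (fun S => (fun ω (k : ℕ) => (U k ω, V k ω)) ⁻¹' S) '' measurableCylinders (fun _ : ℕ => A × B)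
    with hC1
  set C2 : Set (Set Ω) :=
    (fun S => (fun ω (k : ℕ) => W k ω) ⁻¹' S) '' measurableCylinders (fun _ : ℕ => C)
    with hC2
  have hpi1 : IsPiSystem C1 := by
    rintro _ ⟨S1, hS1, rfl⟩ _ ⟨S2, hS2, rfl⟩ hne
    obtain ⟨ω, hω⟩ := hne
    exact ⟨S1 ∩ S2, isPiSystem_measurableCylinders S1 hS1 S2 hS2 ⟨_, hω.1, hω.2⟩,
      Set.preimage_inter⟩
  have hpi2 : IsPiSystem C2 := by
    rintro _ ⟨S1, hS1, rfl⟩ _ ⟨S2, hS2, rfl⟩ hne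
    obtain ⟨ω, hω⟩ := hne
    exact ⟨S1 ∩ S2, isPiSystem_measurableCylinders S1 hS1 S2 hS2 ⟨_, hω.1, hω.2⟩,
      Set.preimage_inter⟩
  have hgen1 : MeasurableSpace.comap (fun ω (k : ℕ) => (U k ω, V k ω)) MeasurableSpace.pi
      = MeasurableSpace.generateFrom C1 := by
    rw [← generateFrom_measurableCylinders, MeasurableSpace.comap_generateFrom]
  have hgen2 : MeasurableSpace.comap (fun ω (k : ℕ) => W k ω) MeasurableSpace.pi
      = MeasurableSpace.generateFrom C2 := by
    rw [← generateFrom_measurableCylinders, MeasurableSpace.comap_generateFrom]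
  have hsets : IndepSets C1 C2 μ := by
    rw [IndepSets_iff]
    rintro _ _ ⟨S1, hS1, rfl⟩ ⟨S2, hS2, rfl⟩
    obtain ⟨s1, E1, hE1, rfl⟩ := (mem_measurableCylinders _).1 hS1
    obtain ⟨s2, E2, hE2, rfl⟩ := (mem_measurableCylinders _).1 hS2
    set n := ((s1 ∪ s2).sup id) + 1 with hn
    have hb1 : ∀ i ∈ s1, i < n := by
      intro i hi
      have : i ≤ (s1 ∪ s2).sup id := Finset.le_sup (f := id) (Finset.mem_union_left _ hi)
      omega
    have hb2 : ∀ i ∈ s2, i < n := by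
      intro i hi
      have : i ≤ (s1 ∪ s2).sup id := Finset.le_sup (f := id) (Finset.mem_union_right _ hi)
      omega
    have hf1 : (fun ω (k : ℕ) => (U k ω, V k ω)) ⁻¹' (cylinder s1 E1)
        = (blk F 0 n) ⁻¹'
          ((fun (v : Fin n → A × B) (i : s1) => v ⟨(i : ℕ), hb1 i i.2⟩) ⁻¹' E1) := rfl
    have hf2 : (fun ω (k : ℕ) => W k ω) ⁻¹' (cylinder s2 E2)
        = (blk W 0 n) ⁻¹'
          ((fun (v : Fin n → C) (i : s2) => v ⟨(i : ℕ), hb2 i i.2⟩) ⁻¹' E2) := rfl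
    have hmeas1 : MeasurableSet
        ((fun (v : Fin n → A × B) (i : s1) => v ⟨(i : ℕ), hb1 i i.2⟩) ⁻¹' E1) :=
      (measurable_pi_lambda _ fun i => measurable_pi_apply _) hE1
    have hmeas2 : MeasurableSet
        ((fun (v : Fin n → C) (i : s2) => v ⟨(i : ℕ), hb2 i i.2⟩) ⁻¹' E2) :=
      (measurable_pi_lambda _ fun i => measurable_pi_apply _) hE2
    exact (hblockind n).measure_inter_preimage_eq_mul _ _ hmeas1 hmeas2
  exact IndepSets.indep hfm.comap_le hgm.comap_le hpi1 hpi2 hgen1 hgen2 hsets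
end
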